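/- Suppose K = G ⋈ H is an internal Zappa–Szép product of monoids and both G and H are Garside monoids. Then K is a Garside monoid; moreover D = D_G ∨ D_H is a Garside element of K, where D_G = ⋁_{a atom of G} Δ_a^G and D_H = ⋁_{a atom of H} Δ_a^H. -/

import Mathlib

namespace ZSPaper

/-- Internal Zappa–Szép product: every element of `K` has a unique `GH`-decomposition
and a unique `HG`-decomposition. -/
structure ZS (K : Type*) [Monoid K] (G H : Submonoid K) : Prop where
  exGH : ∀ k : K, ∃! p : G × H, (p.1 : K) * (p.2 : K) = k
  exHG : ∀ k : K, ∃! p : H × G, (p.1 : K) * (p.2 : K) = k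

variable {K : Type*} [Monoid K] {G H : Submonoid K}

/-- `h ▷ g`, defined by `h * g = (h ▷ g) * (h ◁ g)`. -/
noncomputable def ZS.rtr (zs : ZS K G H) (h : H) (g : G) : G :=
  ((zs.exGH ((h : K) * (g : K))).choose).1

/-- `h ◁ g`, defined by `h * g = (h ▷ g) * (h ◁ g)`. -/
noncomputable def ZS.rtl (zs : ZS K G H) (h : H) (g : G) : H :=
  ((zs.exGH ((h : K) * (g : K))).choose).2

/-- `g ▶ h`, defined by `g * h = (g ▶ h) * (g ◀ h)`. -/
noncomputable def ZS.ltr (zs : ZS K G H) (g : G) (h : H) : H :=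
  ((zs.exHG ((g : K) * (h : K))).choose).1

/-- `g ◀ h`, defined by `g * h = (g ▶ h) * (g ◀ h)`. -/
noncomputable def ZS.ltl (zs : ZS K G H) (g : G) (h : H) : G :=
  ((zs.exHG ((g : K) * (h : K))).choose).2

/-- Right divisibility: `x` is a suffix of `y`. -/
def RDvd {M : Type*} [Monoid M] (x y : M) : Prop := ∃ u, y = u * x

/-- An atom of a monoid. -/
def MAtom {M : Type*} [Monoid M] (a : M) : Prop :=
  a ≠ 1 ∧ ∀ u v : M, a = u * v → u = 1 ∨ v = 1

/-- An atomic monoid: generated by its atoms, with bounded lengths of atomic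
decompositions. -/
def Atomic (M : Type*) [Monoid M] : Prop :=
  (∀ x : M, ∃ l : List M, (∀ a ∈ l, MAtom a) ∧ l.prod = x) ∧
  ∀ x : M, ∃ N : ℕ, ∀ l : List M, (∀ a ∈ l, MAtom a) → l.prod = x → l.length ≤ N

/-- `m` is the least common upper bound of the set `S` with respect to
left divisibility. -/
def IsDvdLUB {M : Type*} [Monoid M] (S : Set M) (m : M) : Prop :=
  (∀ s ∈ S, s ∣ m) ∧ ∀ n, (∀ s ∈ S, s ∣ n) → m ∣ n

/-- `m` is the least common upper bound of `x` and `y` with respect to left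
divisibility. -/
def IsDvdLCM {M : Type*} [Monoid M] (x y m : M) : Prop :=
  x ∣ m ∧ y ∣ m ∧ ∀ n, x ∣ n → y ∣ n → m ∣ n

/-- `d = Δ_x`, the least common upper bound of `{ y \ x : y ∈ M }`, where
`y * (y \ x) = y ∨ x`. -/
def IsDeltaOf {M : Type*} [Monoid M] (x d : M) : Prop :=
  IsDvdLUB {t : M | ∃ y, IsDvdLCM y x (y * t)} d

/-- A Garside structure on a monoid `M` with Garside element `Δ`. -/
structure GarsideStructure (M : Type*) [Monoid M] (Δ : M) : Prop where
  mul_left_cancel : ∀ a b c : M, a * b = a * c → b = c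
  mul_right_cancel : ∀ a b c : M, b * a = c * a → b = c
  atomic : Atomic M
  meet_left : ∀ x y : M, ∃ d, d ∣ x ∧ d ∣ y ∧ ∀ e, e ∣ x → e ∣ y → e ∣ d
  join_left : ∀ x y : M, ∃ m, x ∣ m ∧ y ∣ m ∧ ∀ n, x ∣ n → y ∣ n → m ∣ n
  meet_right : ∀ x y : M, ∃ d, RDvd d x ∧ RDvd d y ∧ ∀ e, RDvd e x → RDvd e y → RDvd e d
  join_right : ∀ x y : M, ∃ m, RDvd x m ∧ RDvd y m ∧ ∀ n, RDvd x n → RDvd y n → RDvd m n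
  balanced : ∀ x, x ∣ Δ ↔ RDvd x Δ
  div_finite : {x : M | x ∣ Δ}.Finite
  div_gen : Submonoid.closure {x : M | x ∣ Δ} = ⊤

end ZSPaper

open ZSPaper Function

namespace ZSAux
open ZSPaper

section General

variable {M : Type*} [Monoid M]

theorem rdvd_refl (x : M) : RDvd x x := ⟨1, (one_mul x).symm⟩

theorem one_rdvd (x : M) : RDvd 1 x := ⟨x, (mul_one x).symm⟩

theorem rdvd_trans {x y z : M} (h1 : RDvd x y) (h2 : RDvd y z) : RDvd x z := by
  obtain ⟨u, rfl⟩ := h1; obtain ⟨v, rfl⟩ := h2; exact ⟨v * u, (mul_assoc v u x).symm⟩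

theorem rdvd_mul_right (u x : M) : RDvd x (u * x) := ⟨u, rfl⟩

/-- In an atomic monoid, `1` is the only unit. -/
theorem eq_one_of_mul_eq_one (hA : Atomic M) {u v : M} (h : u * v = 1) : u = 1 ∧ v = 1 := by
  obtain ⟨lu, hlu, hpu⟩ := hA.1 u
  obtain ⟨lv, hlv, hpv⟩ := hA.1 v
  obtain ⟨N, hN⟩ := hA.2 1
  have hlen : ∀ n : ℕ, n * (lu.length + lv.length) ≤ N := by
    intro n
    have hl : ((List.replicate n (lu ++ lv)).flatten).prod = 1 := by
      rw [List.prod_flatten]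
      rw [List.map_replicate, List.prod_replicate, List.prod_append, hpu, hpv, h, one_pow]
    have hatoms : ∀ a ∈ (List.replicate n (lu ++ lv)).flatten, MAtom a := by
      intro a ha
      rw [List.mem_flatten] at ha
      obtain ⟨l', hl', ha'⟩ := ha
      rw [List.mem_replicate] at hl'
      rcases List.mem_append.mp (hl'.2 ▸ ha') with h' | h'
      · exact hlu a h'
      · exact hlv a h'
    have := hN _ hatoms hl
    rw [List.length_flatten, List.map_replicate] at this
    simpa [List.sum_replicate, smul_eq_mul, List.length_append] using this
  have h0 : lu.length + lv.length = 0 := by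
    by_contra hc
    have h1 : 1 ≤ lu.length + lv.length := Nat.one_le_iff_ne_zero.mpr hc
    have := hlen (N + 1)
    nlinarith
  have hu0 : lu = [] := List.eq_nil_of_length_eq_zero (Nat.eq_zero_of_add_eq_zero_right h0)
  have hv0 : lv = [] := List.eq_nil_of_length_eq_zero (Nat.eq_zero_of_add_eq_zero_left h0)
  subst hu0; subst hv0
  simp at hpu hpv
  exact ⟨hpu.symm, hpv.symm⟩

/-- Maximal length of an atomic decomposition. -/
noncomputable def mlen (x : M) : ℕ :=
  sSup {n | ∃ l : List M, (∀ a ∈ l, MAtom a) ∧ l.prod = x ∧ l.length = n}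

theorem mlen_bddAbove (hA : Atomic M) (x : M) :
    BddAbove {n | ∃ l : List M, (∀ a ∈ l, MAtom a) ∧ l.prod = x ∧ l.length = n} := by
  obtain ⟨N, hN⟩ := hA.2 x
  exact ⟨N, fun n ⟨l, h1, h2, h3⟩ => h3 ▸ hN l h1 h2⟩

theorem mlen_spec (hA : Atomic M) (x : M) :
    ∃ l : List M, (∀ a ∈ l, MAtom a) ∧ l.prod = x ∧ l.length = mlen x := by
  have hne : {n | ∃ l : List M, (∀ a ∈ l, MAtom a) ∧ l.prod = x ∧ l.length = n}.Nonempty := by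
    obtain ⟨l, h1, h2⟩ := hA.1 x
    exact ⟨l.length, l, h1, h2, rfl⟩
  exact Nat.sSup_mem hne (mlen_bddAbove hA x)

theorem le_mlen (hA : Atomic M) {x : M} {l : List M} (h1 : ∀ a ∈ l, MAtom a)
    (h2 : l.prod = x) : l.length ≤ mlen x :=
  le_csSup (mlen_bddAbove hA x) ⟨l, h1, h2, rfl⟩

theorem mlen_superadd (hA : Atomic M) (x y : M) : mlen x + mlen y ≤ mlen (x * y) := by
  obtain ⟨lx, h1, h2, h3⟩ := mlen_spec hA x
  obtain ⟨ly, h4, h5, h6⟩ := mlen_spec hA y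
  have := le_mlen hA (l := lx ++ ly) (x := x * y)
    (fun a ha => (List.mem_append.mp ha).elim (h1 a) (h4 a))
    (by rw [List.prod_append, h2, h5])
  rw [List.length_append, h3, h6] at this
  exact this

theorem mlen_one (hA : Atomic M) : mlen (1 : M) = 0 := by
  have : {n | ∃ l : List M, (∀ a ∈ l, MAtom a) ∧ l.prod = 1 ∧ l.length = n} ⊆ {0} := by
    rintro n ⟨l, h1, h2, h3⟩
    cases l with
    | nil => simpa using h3.symm
    | cons a t =>
      exfalso
      rw [List.prod_cons] at h2
      exact (h1 a List.mem_cons_self).1 (eq_one_of_mul_eq_one hA h2).1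
  rcases Set.subset_singleton_iff_eq.mp this with h | h
  · unfold mlen; rw [h]; simp
  · unfold mlen; rw [h]; simp

theorem mlen_eq_zero (hA : Atomic M) {x : M} (h : mlen x = 0) : x = 1 := by
  obtain ⟨l, h1, h2, h3⟩ := mlen_spec hA x
  rw [h] at h3
  rw [List.eq_nil_of_length_eq_zero h3] at h2
  simpa using h2.symm

theorem mlen_pos (hA : Atomic M) {x : M} (h : x ≠ 1) : 1 ≤ mlen x := by
  rcases Nat.eq_zero_or_pos (mlen x) with h0 | h0
  · exact absurd (mlen_eq_zero hA h0) h
  · exact h0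

theorem mlen_atom (hA : Atomic M) {a : M} (h : MAtom a) : mlen a = 1 := by
  have h1 : 1 ≤ mlen a := mlen_pos hA h.1
  obtain ⟨l, hl1, hl2, hl3⟩ := mlen_spec hA a
  rcases l with _ | ⟨b, t⟩
  · simp at hl3; omega
  · rcases t with _ | ⟨c, s⟩
    · simp at hl3; omega
    · exfalso
      rw [List.prod_cons] at hl2
      rcases h.2 _ _ hl2.symm with hb | ht
      · exact (hl1 b (by simp)).1 hb
      · rw [List.prod_cons] at ht
        exact (hl1 c (by simp)).1 (eq_one_of_mul_eq_one hA ht).1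

theorem atom_of_mlen_one (hA : Atomic M) {x : M} (h : mlen x = 1) : MAtom x := by
  obtain ⟨l, h1, h2, h3⟩ := mlen_spec hA x
  rw [h] at h3
  rcases l with _ | ⟨a, t⟩
  · simp at h3
  · simp only [List.length_cons, add_eq_right] at h3
    rw [List.eq_nil_of_length_eq_zero h3] at h2
    simp only [List.prod_cons, List.prod_nil, mul_one] at h2
    exact h2 ▸ h1 a List.mem_cons_self

theorem peel_left (hA : Atomic M) {x : M} (hx : x ≠ 1) :
    ∃ (a y : M), MAtom a ∧ x = a * y ∧ mlen y + 1 = mlen x := by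
  obtain ⟨l, h1, h2, h3⟩ := mlen_spec hA x
  rcases l with _ | ⟨a, t⟩
  · exact absurd (by simpa using h2.symm) hx
  · rw [List.prod_cons] at h2
    refine ⟨a, t.prod, h1 a (by simp), h2.symm, ?_⟩
    have hle : t.length ≤ mlen t.prod := le_mlen hA (fun b hb => h1 b (by simp [hb])) rfl
    have hge : mlen t.prod + 1 ≤ mlen x := by
      obtain ⟨lt, g1, g2, g3⟩ := mlen_spec hA t.prod
      have := le_mlen hA (l := a :: lt) (x := x)
        (by intro b hb; rcases List.mem_cons.mp hb with h | h
            · exact h ▸ h1 a (by simp)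
            · exact g1 b h)
        (by rw [List.prod_cons, g2, h2])
      simpa [g3] using this
    simp only [List.length_cons] at h3
    omega

theorem peel_right (hA : Atomic M) {x : M} (hx : x ≠ 1) :
    ∃ (y a : M), MAtom a ∧ x = y * a ∧ mlen y + 1 = mlen x := by
  obtain ⟨l, h1, h2, h3⟩ := mlen_spec hA x
  have hne : l ≠ [] := by rintro rfl; exact hx (by simpa using h2.symm)
  obtain ⟨t, a, rfl⟩ := (List.eq_nil_or_concat' l).resolve_left hne
  rw [List.prod_append, List.prod_singleton] at h2
  refine ⟨t.prod, a, h1 a (by simp), h2.symm, ?_⟩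
  have hle : t.length ≤ mlen t.prod := le_mlen hA (fun b hb => h1 b (by simp [hb])) rfl
  have hge : mlen t.prod + 1 ≤ mlen x := by
    obtain ⟨lt, g1, g2, g3⟩ := mlen_spec hA t.prod
    have := le_mlen hA (l := lt ++ [a]) (x := x)
      (by intro b hb; rcases List.mem_append.mp hb with h | h
          · exact g1 b h
          · simp at h; exact h ▸ h1 a (by simp))
      (by rw [List.prod_append, List.prod_singleton, g2, h2])
    simp only [List.length_append, List.length_singleton, g3] at this
    exact this
  simp only [List.length_append, List.length_singleton] at h3
  omega

theorem mlen_le_of_dvd (hA : Atomic M) {x y : M} (h : x ∣ y) : mlen x ≤ mlen y := by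
  obtain ⟨u, rfl⟩ := h
  have := mlen_superadd hA x u
  omega

theorem mlen_le_of_rdvd (hA : Atomic M) {x y : M} (h : RDvd x y) : mlen x ≤ mlen y := by
  obtain ⟨u, rfl⟩ := h
  have := mlen_superadd hA u x
  omega

theorem eq_of_dvd_mlen (hA : Atomic M)
    (lc : ∀ a b c : M, a * b = a * c → b = c) {x y : M} (h : x ∣ y)
    (hlen : mlen y ≤ mlen x) : x = y := by
  obtain ⟨u, rfl⟩ := h
  have hs := mlen_superadd hA x u
  have hu : u = 1 := mlen_eq_zero hA (by omega)
  rw [hu, mul_one]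

theorem dvd_antisymm' (hA : Atomic M) (lc : ∀ a b c : M, a * b = a * c → b = c)
    {x y : M} (h1 : x ∣ y) (h2 : y ∣ x) : x = y :=
  eq_of_dvd_mlen hA lc h1 (mlen_le_of_dvd hA h2)

theorem eq_of_rdvd_mlen (hA : Atomic M) {x y : M} (h : RDvd x y)
    (hlen : mlen y ≤ mlen x) : x = y := by
  obtain ⟨u, rfl⟩ := h
  have hs := mlen_superadd hA u x
  have hu : u = 1 := mlen_eq_zero hA (by omega)
  rw [hu, one_mul]

/-- Existence of products of closure elements. -/
theorem exists_list_of_closure {S : Set M} {x : M} (hx : x ∈ Submonoid.closure S) :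
    ∃ l : List M, (∀ s ∈ l, s ∈ S) ∧ l.prod = x := by
  induction hx using Submonoid.closure_induction with
  | mem y hy => exact ⟨[y], by simpa using hy, by simp⟩
  | one => exact ⟨[], by simp, by simp⟩
  | mul y z _ _ hy hz =>
    obtain ⟨ly, hy1, hy2⟩ := hy
    obtain ⟨lz, hz1, hz2⟩ := hz
    exact ⟨ly ++ lz, fun s hs => (List.mem_append.mp hs).elim (hy1 s) (hz1 s),
      by rw [List.prod_append, hy2, hz2]⟩

/-- Atoms divide the Garside element. -/
theorem atom_dvd_delta {Δ : M} (hA : Atomic M)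
    (hgen : Submonoid.closure {x : M | x ∣ Δ} = ⊤) {a : M} (ha : MAtom a) : a ∣ Δ := by
  have hmem : a ∈ Submonoid.closure {x : M | x ∣ Δ} := by rw [hgen]; trivial
  obtain ⟨l, h1, h2⟩ := exists_list_of_closure hmem
  clear hmem hgen
  induction l generalizing a with
  | nil => exact absurd (by simpa using h2.symm) ha.1
  | cons b t ih =>
    rw [List.prod_cons] at h2
    rcases ha.2 _ _ h2.symm with hb | ht
    · rw [hb, one_mul] at h2
      exact ih ha (fun s hs => h1 s (List.mem_cons_of_mem b hs)) h2
    · rw [ht, mul_one] at h2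
      exact h2 ▸ h1 b List.mem_cons_self

theorem atoms_finite_of_gen {Δ : M} (hA : Atomic M)
    (hfin : {x : M | x ∣ Δ}.Finite)
    (hgen : Submonoid.closure {x : M | x ∣ Δ} = ⊤) : {a : M | MAtom a}.Finite :=
  hfin.subset (fun a ha => atom_dvd_delta hA hgen ha)

theorem levels_finite (hA : Atomic M) (hatoms : {a : M | MAtom a}.Finite) :
    ∀ n, {x : M | mlen x ≤ n}.Finite := by
  intro n
  induction n with
  | zero =>
    apply Set.Finite.subset (Set.finite_singleton 1)
    intro x hx
    simp only [Set.mem_setOf_eq, Nat.le_zero] at hx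
    exact mlen_eq_zero hA hx
  | succ n ih =>
    apply Set.Finite.subset ((hatoms.biUnion
      (fun a _ => ih.image (fun y => a * y))).insert 1)
    intro x hx
    simp only [Set.mem_setOf_eq] at hx
    by_cases h1 : x = 1
    · exact Set.mem_insert_iff.mpr (Or.inl h1)
    · obtain ⟨a, y, ha, rfl, hlen⟩ := peel_left hA h1
      refine Set.mem_insert_iff.mpr (Or.inr ?_)
      simp only [Set.mem_iUnion]
      exact ⟨a, ha, y, by simp only [Set.mem_setOf_eq]; omega, rfl⟩

theorem surj_of_inj_len (hA : Atomic M) (hatoms : {a : M | MAtom a}.Finite)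
    {f : M → M} (hinj : Function.Injective f) (hlen : ∀ x, mlen (f x) = mlen x) :
    Function.Surjective f := by
  intro w
  haveI : Finite {x : M // mlen x ≤ mlen w} := (levels_finite hA hatoms (mlen w)).to_subtype
  set F : {x : M // mlen x ≤ mlen w} → {x : M // mlen x ≤ mlen w} :=
    fun x => ⟨f x.1, by rw [hlen]; exact x.2⟩ with hF
  have hFinj : Function.Injective F := by
    intro x y hxy
    exact Subtype.ext (hinj (congrArg Subtype.val hxy))
  obtain ⟨x, hx⟩ := Finite.injective_iff_surjective.mp hFinj ⟨w, le_rfl⟩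
  exact ⟨x.1, congrArg Subtype.val hx⟩

theorem divisors_finite (hA : Atomic M) (hatoms : {a : M | MAtom a}.Finite) (z : M) :
    {x : M | x ∣ z}.Finite :=
  (levels_finite hA hatoms (mlen z)).subset (fun x hx => mlen_le_of_dvd hA hx)

theorem rdivisors_finite (hA : Atomic M) (hatoms : {a : M | MAtom a}.Finite) (z : M) :
    {x : M | RDvd x z}.Finite :=
  (levels_finite hA hatoms (mlen z)).subset (fun x hx => mlen_le_of_rdvd hA hx)

end General

section Lat

variable {M : Type*} [Monoid M]

/-- Bundle of hypotheses for lattice calculus. -/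
structure LatPack (M : Type*) [Monoid M] : Prop where
  hA : Atomic M
  lc : ∀ a b c : M, a * b = a * c → b = c
  rc : ∀ a b c : M, b * a = c * a → b = c
  jl : ∀ x y : M, ∃ m, IsDvdLCM x y m
  jr : ∀ x y : M, ∃ m, RDvd x m ∧ RDvd y m ∧ ∀ n, RDvd x n → RDvd y n → RDvd m n

variable (P : LatPack M)
include P

theorem LatPack.antisymm {x y : M} (h1 : x ∣ y) (h2 : y ∣ x) : x = y :=
  dvd_antisymm' P.hA P.lc h1 h2

theorem LatPack.rantisymm {x y : M} (h1 : RDvd x y) (h2 : RDvd y x) : x = y := by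
  obtain ⟨u, rfl⟩ := h1
  have := mlen_le_of_rdvd P.hA h2
  have hs := mlen_superadd P.hA u x
  have hu : u = 1 := mlen_eq_zero P.hA (by omega)
  rw [hu, one_mul]

noncomputable def LatPack.join (x y : M) : M := (P.jl x y).choose

theorem LatPack.join_spec (x y : M) : IsDvdLCM x y (P.join x y) := (P.jl x y).choose_spec

theorem LatPack.join_unique {x y m : M} (h : IsDvdLCM x y m) : P.join x y = m :=
  P.antisymm ((P.join_spec x y).2.2 m h.1 h.2.1) (h.2.2 _ (P.join_spec x y).1 (P.join_spec x y).2.1)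

theorem LatPack.dvd_join_left (x y : M) : x ∣ P.join x y := (P.join_spec x y).1
theorem LatPack.dvd_join_right (x y : M) : y ∣ P.join x y := (P.join_spec x y).2.1
theorem LatPack.join_dvd {x y n : M} (h1 : x ∣ n) (h2 : y ∣ n) : P.join x y ∣ n :=
  (P.join_spec x y).2.2 n h1 h2

theorem LatPack.join_comm (x y : M) : P.join x y = P.join y x :=
  P.join_unique ⟨P.dvd_join_right y x, P.dvd_join_left y x, fun n h1 h2 => P.join_dvd h2 h1⟩

theorem LatPack.join_self_of_dvd {x y : M} (h : x ∣ y) : P.join x y = y :=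
  P.join_unique ⟨h, dvd_refl y, fun _ _ h2 => h2⟩

noncomputable def LatPack.comp (y x : M) : M := (P.dvd_join_left y x).choose

theorem LatPack.comp_spec (y x : M) : y * P.comp y x = P.join y x :=
  (P.dvd_join_left y x).choose_spec.symm

theorem LatPack.comp_unique {y x t : M} (h : IsDvdLCM y x (y * t)) : P.comp y x = t := by
  have h2 := P.join_unique h
  have := P.comp_spec y x
  rw [h2] at this
  exact P.lc y _ _ this

theorem LatPack.isLCM_comp (y x : M) : IsDvdLCM y x (y * P.comp y x) := by
  rw [P.comp_spec]; exact P.join_spec y x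

theorem LatPack.comp_one (x : M) : P.comp 1 x = x := by
  apply P.comp_unique
  rw [one_mul]
  exact ⟨one_dvd x, dvd_refl x, fun n _ h2 => h2⟩

theorem LatPack.comp_of_dvd {y x : M} (h : x ∣ y) : P.comp y x = 1 := by
  apply P.comp_unique
  rw [mul_one]
  exact ⟨dvd_refl y, h, fun n h1 _ => h1⟩

theorem LatPack.comp_self_one (y : M) : P.comp y 1 = 1 := P.comp_of_dvd (one_dvd y)

theorem LatPack.mul_lcm (y a b : M) : IsDvdLCM (y * a) (y * b) (y * P.join a b) := by
  refine ⟨?_, ?_, ?_⟩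
  · obtain ⟨c, hc⟩ := P.dvd_join_left a b
    exact ⟨c, by rw [hc, mul_assoc]⟩
  · obtain ⟨c, hc⟩ := P.dvd_join_right a b
    exact ⟨c, by rw [hc, mul_assoc]⟩
  · intro n h1 h2
    obtain ⟨n', rfl⟩ : y ∣ n := (dvd_mul_right y a).trans h1
    have ha : a ∣ n' := by
      obtain ⟨c, hc⟩ := h1
      rw [mul_assoc] at hc
      exact ⟨c, P.lc y _ _ hc⟩
    have hb : b ∣ n' := by
      obtain ⟨c, hc⟩ := h2
      rw [mul_assoc] at hc
      exact ⟨c, P.lc y _ _ hc⟩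
    obtain ⟨c, hc⟩ := P.join_dvd ha hb
    exact ⟨c, by rw [hc, mul_assoc]⟩

theorem LatPack.mul_join (y a b : M) : y * P.join a b = P.join (y * a) (y * b) :=
  (P.join_unique (P.mul_lcm y a b)).symm

theorem LatPack.comp_mul_left (y₁ y₂ x : M) :
    P.comp (y₁ * y₂) x = P.comp y₂ (P.comp y₁ x) := by
  apply P.comp_unique
  set c := P.comp y₁ x with hc
  have key : (y₁ * y₂) * P.comp y₂ c = y₁ * P.join y₂ c := by
    rw [mul_assoc, P.comp_spec]
  rw [key]
  refine ⟨?_, ?_, ?_⟩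
  · obtain ⟨d, hd⟩ := P.dvd_join_left y₂ c
    exact ⟨d, by rw [hd, mul_assoc]⟩
  · have h1 : x ∣ y₁ * c := by rw [P.comp_spec]; exact P.dvd_join_right y₁ x
    have h2 : y₁ * c ∣ y₁ * P.join y₂ c := by
      obtain ⟨d, hd⟩ := P.dvd_join_right y₂ c
      exact ⟨d, by rw [hd, mul_assoc]⟩
    exact h1.trans h2
  · intro n h1 h2
    have hy1 : y₁ ∣ n := (dvd_mul_right y₁ y₂).trans h1
    have hjoin : y₁ * c ∣ n := by
      rw [P.comp_spec]
      exact P.join_dvd hy1 h2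
    obtain ⟨w, hw⟩ := hjoin
    rw [mul_assoc] at hw
    have hn : n = y₁ * (c * w) := hw
    have hy2 : y₂ ∣ c * w := by
      obtain ⟨v, hv⟩ := h1
      rw [hn, mul_assoc] at hv
      exact ⟨v, P.lc y₁ _ _ hv⟩
    have hcdvd : c ∣ c * w := dvd_mul_right c w
    obtain ⟨v, hv⟩ := P.join_dvd hy2 hcdvd
    exact ⟨v, by rw [hn, hv, mul_assoc]⟩

theorem LatPack.comp_join_distrib (y a b : M) :
    P.comp y (P.join a b) = P.join (P.comp y a) (P.comp y b) := by
  apply P.comp_unique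
  have key : y * P.join (P.comp y a) (P.comp y b) = P.join (P.join y a) (P.join y b) := by
    rw [P.mul_join, P.comp_spec, P.comp_spec]
  rw [key]
  refine ⟨?_, ?_, ?_⟩
  · exact (P.dvd_join_left y a).trans (P.dvd_join_left _ _)
  · apply P.join_dvd
    · exact (P.dvd_join_right y a).trans (P.dvd_join_left _ _)
    · exact (P.dvd_join_right y b).trans (P.dvd_join_right _ _)
  · intro n h1 h2
    apply P.join_dvd
    · exact P.join_dvd h1 ((P.dvd_join_left a b).trans h2)
    · exact P.join_dvd h1 ((P.dvd_join_right a b).trans h2)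

theorem LatPack.comp_mono {a b : M} (y : M) (h : a ∣ b) : P.comp y a ∣ P.comp y b := by
  have : P.join a b = b := P.join_self_of_dvd h
  have := P.comp_join_distrib y a b
  rw [P.join_self_of_dvd h] at this
  rw [this]
  exact P.dvd_join_left _ _

theorem LatPack.comp_dvd_comp {y x n : M} (h1 : y ∣ n) (h2 : x ∣ n) : P.comp y x ∣ P.comp y n := by
  exact P.comp_mono y h2

noncomputable def LatPack.foldJoin (l : List M) : M := l.foldr P.join 1

theorem LatPack.foldJoin_dvd {l : List M} {n : M} (h : ∀ s ∈ l, s ∣ n) : P.foldJoin l ∣ n := by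
  induction l with
  | nil => exact one_dvd n
  | cons a t ih =>
    exact P.join_dvd (h a List.mem_cons_self) (ih fun s hs => h s (List.mem_cons_of_mem a hs))

theorem LatPack.dvd_foldJoin {l : List M} {s : M} (h : s ∈ l) : s ∣ P.foldJoin l := by
  induction l with
  | nil => simp at h
  | cons a t ih =>
    rcases List.mem_cons.mp h with h | h
    · exact h ▸ P.dvd_join_left a (P.foldJoin t)
    · exact (ih h).trans (P.dvd_join_right _ _)

theorem LatPack.comp_foldJoin (y : M) (l : List M) :
    P.comp y (P.foldJoin l) = P.foldJoin (l.map (P.comp y)) := by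
  induction l with
  | nil => simpa [LatPack.foldJoin] using P.comp_self_one y
  | cons a t ih =>
    show P.comp y (P.join a (P.foldJoin t)) = P.join (P.comp y a) (P.foldJoin (t.map (P.comp y)))
    rw [P.comp_join_distrib, ih]

/-- Right-handed notions. -/
noncomputable def LatPack.rjoin (x y : M) : M := (P.jr x y).choose

theorem LatPack.rjoin_spec (x y : M) :
    RDvd x (P.rjoin x y) ∧ RDvd y (P.rjoin x y) ∧
      ∀ n, RDvd x n → RDvd y n → RDvd (P.rjoin x y) n := (P.jr x y).choose_spec

theorem LatPack.rjoin_unique {x y m : M}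
    (h : RDvd x m ∧ RDvd y m ∧ ∀ n, RDvd x n → RDvd y n → RDvd m n) : P.rjoin x y = m :=
  P.rantisymm ((P.rjoin_spec x y).2.2 m h.1 h.2.1)
    (h.2.2 _ (P.rjoin_spec x y).1 (P.rjoin_spec x y).2.1)

theorem LatPack.rdvd_rjoin_left (x y : M) : RDvd x (P.rjoin x y) := (P.rjoin_spec x y).1
theorem LatPack.rdvd_rjoin_right (x y : M) : RDvd y (P.rjoin x y) := (P.rjoin_spec x y).2.1
theorem LatPack.rjoin_rdvd {x y n : M} (h1 : RDvd x n) (h2 : RDvd y n) : RDvd (P.rjoin x y) n :=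
  (P.rjoin_spec x y).2.2 n h1 h2

theorem LatPack.rjoin_self_of_rdvd {x y : M} (h : RDvd x y) : P.rjoin y x = y :=
  P.rjoin_unique ⟨rdvd_refl y, h, fun _ h1 _ => h1⟩

theorem LatPack.rjoin_self_right {x y : M} (h : RDvd x y) : P.rjoin x y = y :=
  P.rjoin_unique ⟨h, rdvd_refl y, fun _ _ h2 => h2⟩

noncomputable def LatPack.rcomp (y x : M) : M := (P.rdvd_rjoin_left y x).choose

theorem LatPack.rcomp_spec (y x : M) : P.rcomp y x * y = P.rjoin y x :=
  (P.rdvd_rjoin_left y x).choose_spec.symm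

theorem LatPack.rcomp_unique {y x t : M}
    (h : RDvd y (t * y) ∧ RDvd x (t * y) ∧ ∀ n, RDvd y n → RDvd x n → RDvd (t * y) n) :
    P.rcomp y x = t := by
  have h2 : P.rjoin y x = t * y := P.rjoin_unique h
  have := P.rcomp_spec y x
  rw [h2] at this
  exact P.rc y _ _ this

theorem LatPack.rcomp_one (x : M) : P.rcomp 1 x = x := by
  apply P.rcomp_unique
  rw [mul_one]
  exact ⟨one_rdvd x, rdvd_refl x, fun n _ h2 => h2⟩

theorem LatPack.rcomp_of_rdvd {y x : M} (h : RDvd x y) : P.rcomp y x = 1 := by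
  apply P.rcomp_unique
  rw [one_mul]
  exact ⟨rdvd_refl y, h, fun n h1 _ => h1⟩

theorem LatPack.rcomp_self_one (y : M) : P.rcomp y 1 = 1 := P.rcomp_of_rdvd (one_rdvd y)

theorem LatPack.lcm_rmul (y a b : M) :
    RDvd (a * y) (P.rjoin a b * y) ∧ RDvd (b * y) (P.rjoin a b * y) ∧
      ∀ n, RDvd (a * y) n → RDvd (b * y) n → RDvd (P.rjoin a b * y) n := by
  refine ⟨?_, ?_, ?_⟩
  · obtain ⟨c, hc⟩ := P.rdvd_rjoin_left a b
    exact ⟨c, by rw [hc, mul_assoc]⟩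
  · obtain ⟨c, hc⟩ := P.rdvd_rjoin_right a b
    exact ⟨c, by rw [hc, mul_assoc]⟩
  · intro n h1 h2
    obtain ⟨n', rfl⟩ : RDvd y n := rdvd_trans (rdvd_mul_right a y) h1
    have ha : RDvd a n' := by
      obtain ⟨c, hc⟩ := h1
      rw [← mul_assoc] at hc
      exact ⟨c, P.rc y _ _ hc⟩
    have hb : RDvd b n' := by
      obtain ⟨c, hc⟩ := h2
      rw [← mul_assoc] at hc
      exact ⟨c, P.rc y _ _ hc⟩
    obtain ⟨c, hc⟩ := P.rjoin_rdvd ha hb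
    exact ⟨c, by rw [hc, mul_assoc]⟩

theorem LatPack.rjoin_mul (y a b : M) : P.rjoin a b * y = P.rjoin (a * y) (b * y) :=
  (P.rjoin_unique (P.lcm_rmul y a b)).symm

theorem LatPack.rcomp_mul_right (y₁ y₂ x : M) :
    P.rcomp (y₁ * y₂) x = P.rcomp y₁ (P.rcomp y₂ x) := by
  apply P.rcomp_unique
  set c := P.rcomp y₂ x with hc
  have key : P.rcomp y₁ c * (y₁ * y₂) = P.rjoin y₁ c * y₂ := by
    rw [← mul_assoc, P.rcomp_spec]
  rw [key]
  refine ⟨?_, ?_, ?_⟩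
  · obtain ⟨d, hd⟩ := P.rdvd_rjoin_left y₁ c
    exact ⟨d, by rw [hd, mul_assoc]⟩
  · have h1 : RDvd x (c * y₂) := by rw [P.rcomp_spec]; exact P.rdvd_rjoin_right y₂ x
    have h2 : RDvd (c * y₂) (P.rjoin y₁ c * y₂) := by
      obtain ⟨d, hd⟩ := P.rdvd_rjoin_right y₁ c
      exact ⟨d, by rw [hd, mul_assoc]⟩
    exact rdvd_trans h1 h2
  · intro n h1 h2
    have hy2 : RDvd y₂ n := rdvd_trans (rdvd_mul_right y₁ y₂) h1
    obtain ⟨w, rfl⟩ := hy2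
    have hy1 : RDvd y₁ w := by
      obtain ⟨v, hv⟩ := h1
      rw [← mul_assoc] at hv
      exact ⟨v, P.rc y₂ _ _ hv⟩
    have hcw : RDvd c w := by
      have hj : RDvd (c * y₂) (w * y₂) := by
        rw [P.rcomp_spec]
        exact P.rjoin_rdvd ⟨w, rfl⟩ h2
      obtain ⟨u, hu⟩ := hj
      rw [← mul_assoc] at hu
      exact ⟨u, P.rc y₂ _ _ hu⟩
    obtain ⟨v, hv⟩ := P.rjoin_rdvd hy1 hcw
    exact ⟨v, by rw [hv, mul_assoc]⟩

theorem LatPack.rjoin_comm (x y : M) : P.rjoin x y = P.rjoin y x :=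
  P.rjoin_unique ⟨P.rdvd_rjoin_right y x, P.rdvd_rjoin_left y x,
    fun n h1 h2 => P.rjoin_rdvd h2 h1⟩

theorem LatPack.rcomp_rjoin_distrib (y a b : M) :
    P.rcomp y (P.rjoin a b) = P.rjoin (P.rcomp y a) (P.rcomp y b) := by
  apply P.rcomp_unique
  have key : P.rjoin (P.rcomp y a) (P.rcomp y b) * y = P.rjoin (P.rjoin y a) (P.rjoin y b) := by
    rw [P.rjoin_mul, P.rcomp_spec, P.rcomp_spec]
  rw [key]
  refine ⟨?_, ?_, ?_⟩
  · exact rdvd_trans (P.rdvd_rjoin_left y a) (P.rdvd_rjoin_left _ _)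
  · apply P.rjoin_rdvd
    · exact rdvd_trans (P.rdvd_rjoin_right y a) (P.rdvd_rjoin_left _ _)
    · exact rdvd_trans (P.rdvd_rjoin_right y b) (P.rdvd_rjoin_right _ _)
  · intro n h1 h2
    apply P.rjoin_rdvd
    · exact P.rjoin_rdvd h1 (rdvd_trans (P.rdvd_rjoin_left a b) h2)
    · exact P.rjoin_rdvd h1 (rdvd_trans (P.rdvd_rjoin_right a b) h2)

theorem LatPack.rcomp_mono {a b : M} (y : M) (h : RDvd a b) :
    RDvd (P.rcomp y a) (P.rcomp y b) := by
  have := P.rcomp_rjoin_distrib y a b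
  rw [P.rjoin_comm, P.rjoin_self_of_rdvd h] at this
  rw [this]
  exact P.rdvd_rjoin_left _ _

noncomputable def LatPack.rfoldJoin (l : List M) : M := l.foldr P.rjoin 1

theorem LatPack.rfoldJoin_rdvd {l : List M} {n : M} (h : ∀ s ∈ l, RDvd s n) :
    RDvd (P.rfoldJoin l) n := by
  induction l with
  | nil => exact one_rdvd n
  | cons a t ih =>
    exact P.rjoin_rdvd (h a List.mem_cons_self)
      (ih fun s hs => h s (List.mem_cons_of_mem a hs))

theorem LatPack.rdvd_rfoldJoin {l : List M} {s : M} (h : s ∈ l) : RDvd s (P.rfoldJoin l) := by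
  induction l with
  | nil => simp at h
  | cons a t ih =>
    rcases List.mem_cons.mp h with h | h
    · exact h ▸ P.rdvd_rjoin_left a (P.rfoldJoin t)
    · exact rdvd_trans (ih h) (P.rdvd_rjoin_right _ _)

theorem LatPack.rcomp_rfoldJoin (y : M) (l : List M) :
    P.rcomp y (P.rfoldJoin l) = P.rfoldJoin (l.map (P.rcomp y)) := by
  induction l with
  | nil => simpa [LatPack.rfoldJoin] using P.rcomp_self_one y
  | cons a t ih =>
    show P.rcomp y (P.rjoin a (P.rfoldJoin t)) =
      P.rjoin (P.rcomp y a) (P.rfoldJoin (t.map (P.rcomp y)))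
    rw [P.rcomp_rjoin_distrib, ih]

/-- Meets from joins and finiteness. -/
theorem LatPack.meets (hfin : ∀ z : M, {x : M | x ∣ z}.Finite) :
    ∀ x y : M, ∃ d, d ∣ x ∧ d ∣ y ∧ ∀ e, e ∣ x → e ∣ y → e ∣ d := by
  intro x y
  have hCD : {e : M | e ∣ x ∧ e ∣ y}.Finite := (hfin x).subset (fun e he => he.1)
  set l := hCD.toFinset.toList with hl
  have hmem : ∀ e : M, e ∣ x ∧ e ∣ y ↔ e ∈ l := by
    intro e
    rw [hl, Finset.mem_toList, Set.Finite.mem_toFinset]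
    rfl
  refine ⟨P.foldJoin l, ?_, ?_, ?_⟩
  · exact P.foldJoin_dvd (fun s hs => ((hmem s).mpr hs).1)
  · exact P.foldJoin_dvd (fun s hs => ((hmem s).mpr hs).2)
  · intro e h1 h2
    exact P.dvd_foldJoin ((hmem e).mp ⟨h1, h2⟩)

theorem LatPack.rmeets (hfin : ∀ z : M, {x : M | RDvd x z}.Finite) :
    ∀ x y : M, ∃ d, RDvd d x ∧ RDvd d y ∧ ∀ e, RDvd e x → RDvd e y → RDvd e d := by
  intro x y
  have hCD : {e : M | RDvd e x ∧ RDvd e y}.Finite := (hfin x).subset (fun e he => he.1)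
  set l := hCD.toFinset.toList with hl
  have hmem : ∀ e : M, RDvd e x ∧ RDvd e y ↔ e ∈ l := by
    intro e
    rw [hl, Finset.mem_toList, Set.Finite.mem_toFinset]
    rfl
  refine ⟨P.rfoldJoin l, ?_, ?_, ?_⟩
  · exact P.rfoldJoin_rdvd (fun s hs => ((hmem s).mpr hs).1)
  · exact P.rfoldJoin_rdvd (fun s hs => ((hmem s).mpr hs).2)
  · intro e h1 h2
    exact P.rdvd_rfoldJoin ((hmem e).mp ⟨h1, h2⟩)

/-- The pigeonhole balancedness criterion. -/
theorem LatPack.balanced_of {D : M} (hfin : {x : M | x ∣ D}.Finite)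
    (hstar : ∀ y, P.comp y D ∣ D) : ∀ x, x ∣ D ↔ RDvd x D := by
  intro x
  have key : ∀ v : M, v ∣ D → v * P.comp v D = D := by
    intro v hv
    rw [P.comp_spec, P.join_self_of_dvd hv]
  constructor
  · intro hx
    haveI : Finite {x : M // x ∣ D} := hfin.to_subtype
    have hinj : Function.Injective (fun v : {x : M // x ∣ D} =>
        (⟨P.comp v.1 D, hstar v.1⟩ : {x : M // x ∣ D})) := by
      intro v v' hvv
      simp only [Subtype.mk.injEq] at hvv
      have := (key v.1 v.2).trans (key v'.1 v'.2).symm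
      rw [hvv] at this
      exact Subtype.ext (P.rc _ _ _ this)
    obtain ⟨v, hv⟩ := Finite.injective_iff_surjective.mp hinj ⟨x, hx⟩
    simp only [Subtype.mk.injEq] at hv
    exact ⟨v.1, by rw [← hv, key v.1 v.2]⟩
  · rintro ⟨u, hu⟩
    have hud : u ∣ D := ⟨x, hu⟩
    have hk := key u hud
    have hx : x = P.comp u D := P.lc u _ _ (by rw [hk, ← hu])
    rw [hx]
    exact hstar u

end Lat
section MoreLat

variable {M : Type*} [Monoid M] (P : LatPack M)
include P

theorem LatPack.lub_unique {S : Set M} {m m' : M} (h : IsDvdLUB S m) (h' : IsDvdLUB S m') :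
    m = m' :=
  P.antisymm (h.2 m' h'.1) (h'.2 m h.1)

/-- The mirror pigeonhole criterion. -/
theorem LatPack.rbalanced_of {D : M} (hfin : {x : M | RDvd x D}.Finite)
    (hstar : ∀ y, RDvd (P.rcomp y D) D) : ∀ x, RDvd x D ↔ x ∣ D := by
  intro x
  have key : ∀ v : M, RDvd v D → P.rcomp v D * v = D := by
    intro v hv
    rw [P.rcomp_spec, P.rjoin_self_right hv]
  constructor
  · intro hx
    haveI : Finite {x : M // RDvd x D} := hfin.to_subtype
    have hinj : Function.Injective (fun v : {x : M // RDvd x D} =>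
        (⟨P.rcomp v.1 D, hstar v.1⟩ : {x : M // RDvd x D})) := by
      intro v v' hvv
      simp only [Subtype.mk.injEq] at hvv
      have := (key v.1 v.2).trans (key v'.1 v'.2).symm
      rw [hvv] at this
      exact Subtype.ext (P.lc _ _ _ this)
    obtain ⟨v, hv⟩ := Finite.injective_iff_surjective.mp hinj ⟨x, hx⟩
    simp only [Subtype.mk.injEq] at hv
    exact ⟨v.1, by rw [← hv, key v.1 v.2]⟩
  · rintro ⟨u, hu⟩
    have hud : RDvd u D := ⟨x, hu⟩
    have hk := key u hud
    have hx : x = P.rcomp u D := P.rc u _ _ (by rw [hk, ← hu])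
    rw [hx]
    exact hstar u

/-- Right-star from balancedness and left-star. -/
theorem LatPack.rstar_of {D : M} (hbal : ∀ x, x ∣ D ↔ RDvd x D)
    (hato : ∀ a, MAtom a → RDvd a D) : ∀ y, RDvd (P.rcomp y D) D := by
  suffices H : ∀ n, ∀ y : M, mlen y ≤ n → RDvd (P.rcomp y D) D by
    intro y; exact H (mlen y) y le_rfl
  intro n
  induction n with
  | zero =>
    intro y hy
    rw [mlen_eq_zero P.hA (Nat.le_zero.mp hy), P.rcomp_one]
    exact rdvd_refl D
  | succ n ih =>
    intro y hy
    by_cases h1 : y = 1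
    · rw [h1, P.rcomp_one]; exact rdvd_refl D
    · obtain ⟨y', a, ha, rfl, hlen⟩ := peel_right P.hA h1
      rw [P.rcomp_mul_right]
      have hz : P.rcomp a D * a = D := by
        rw [P.rcomp_spec, P.rjoin_self_right (hato a ha)]
      have hz2 : RDvd (P.rcomp a D) D := (hbal _).mp ⟨a, hz.symm⟩
      exact rdvd_trans (P.rcomp_mono y' hz2) (ih y' (by omega))

/-- Left-star from mirror balancedness and right-star. -/
theorem LatPack.lstar_of {D : M} (hbal : ∀ x, RDvd x D ↔ x ∣ D)
    (hato : ∀ a, MAtom a → a ∣ D) : ∀ y, P.comp y D ∣ D := by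
  suffices H : ∀ n, ∀ y : M, mlen y ≤ n → P.comp y D ∣ D by
    intro y; exact H (mlen y) y le_rfl
  intro n
  induction n with
  | zero =>
    intro y hy
    rw [mlen_eq_zero P.hA (Nat.le_zero.mp hy), P.comp_one]
  | succ n ih =>
    intro y hy
    by_cases h1 : y = 1
    · rw [h1, P.comp_one]
    · obtain ⟨a, y', ha, rfl, hlen⟩ := peel_left P.hA h1
      rw [P.comp_mul_left]
      have hz : a * P.comp a D = D := by
        rw [P.comp_spec, P.join_self_of_dvd (hato a ha)]
      have hz2 : P.comp a D ∣ D := (hbal _).mp ⟨a, hz.symm⟩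
      exact (P.comp_mono y' hz2).trans (ih y' (by omega))

theorem LatPack.star_of_atoms {D : M} (hato : ∀ a, MAtom a → P.comp a D ∣ D) :
    ∀ y, P.comp y D ∣ D := by
  suffices Key : ∀ n, ∀ y : M, mlen y ≤ n → P.comp y D ∣ D by
    intro y; exact Key (mlen y) y le_rfl
  intro n
  induction n with
  | zero =>
    intro y hy
    rw [mlen_eq_zero P.hA (Nat.le_zero.mp hy), P.comp_one]
  | succ n ih =>
    intro y hy
    by_cases h1 : y = 1
    · rw [h1, P.comp_one]
    · obtain ⟨a, y', ha, rfl, hlen⟩ := peel_left P.hA h1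
      rw [P.comp_mul_left]
      exact (P.comp_mono y' (hato a ha)).trans (ih y' (by omega))

end MoreLat

section GarsTheory

variable {M : Type*} [Monoid M] {Δ : M} (gs : GarsideStructure M Δ)
include gs

/-- The lattice pack of a Garside structure. -/
theorem packOf : LatPack M :=
  ⟨gs.atomic, gs.mul_left_cancel, gs.mul_right_cancel, gs.join_left, gs.join_right⟩

/-- Divisors of `Δ` are closed under left complement. -/
theorem comp_delta (P : LatPack M) :
    ∀ y x : M, x ∣ Δ → P.comp y x ∣ Δ := by
  suffices H : ∀ n, ∀ y x : M, mlen y ≤ n → x ∣ Δ → P.comp y x ∣ Δ by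
    intro y x hx; exact H (mlen y) y x le_rfl hx
  intro n
  induction n with
  | zero =>
    intro y x hy hx
    rw [mlen_eq_zero P.hA (Nat.le_zero.mp hy), P.comp_one]
    exact hx
  | succ n ih =>
    intro y x hy hx
    by_cases h1 : y = 1
    · rw [h1, P.comp_one]; exact hx
    · obtain ⟨a, y', ha, rfl, hlen⟩ := peel_left P.hA h1
      rw [P.comp_mul_left]
      have hax : P.comp a x ∣ Δ := by
        have haΔ : a ∣ Δ := atom_dvd_delta gs.atomic gs.div_gen ha
        obtain ⟨z, hz⟩ := id haΔ
        have hjoin : a * P.comp a x ∣ a * z := by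
          rw [P.comp_spec, ← hz]
          exact P.join_dvd haΔ hx
        have hcz : P.comp a x ∣ z := by
          obtain ⟨w, hw⟩ := hjoin
          rw [mul_assoc] at hw
          exact ⟨w, gs.mul_left_cancel a _ _ hw⟩
        have hzΔ : z ∣ Δ := (gs.balanced z).mpr ⟨a, hz⟩
        exact hcz.trans hzΔ
      exact ih y' _ (by omega) hax

/-- Divisors of `Δ` are closed under right complement. -/
theorem rcomp_delta (P : LatPack M) :
    ∀ y x : M, RDvd x Δ → RDvd (P.rcomp y x) Δ := by
  suffices H : ∀ n, ∀ y x : M, mlen y ≤ n → RDvd x Δ → RDvd (P.rcomp y x) Δ by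
    intro y x hx; exact H (mlen y) y x le_rfl hx
  intro n
  induction n with
  | zero =>
    intro y x hy hx
    rw [mlen_eq_zero P.hA (Nat.le_zero.mp hy), P.rcomp_one]
    exact hx
  | succ n ih =>
    intro y x hy hx
    by_cases h1 : y = 1
    · rw [h1, P.rcomp_one]; exact hx
    · obtain ⟨y', a, ha, rfl, hlen⟩ := peel_right P.hA h1
      rw [P.rcomp_mul_right]
      have hax : RDvd (P.rcomp a x) Δ := by
        have haΔ : RDvd a Δ := (gs.balanced a).mp (atom_dvd_delta gs.atomic gs.div_gen ha)
        obtain ⟨z, hz⟩ := id haΔ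
        have hjoin : RDvd (P.rcomp a x * a) (z * a) := by
          rw [P.rcomp_spec, ← hz]
          exact P.rjoin_rdvd haΔ hx
        have hcz : RDvd (P.rcomp a x) z := by
          obtain ⟨w, hw⟩ := hjoin
          rw [← mul_assoc] at hw
          exact ⟨w, gs.mul_right_cancel a _ _ hw⟩
        have hzΔ : RDvd z Δ := (gs.balanced z).mp ⟨a, hz⟩
        exact rdvd_trans hcz hzΔ
      exact ih y' _ (by omega) hax

omit gs in
/-- The set `{ y \ x : y ∈ M }`. -/
def Tset (x : M) : Set M := {t : M | ∃ y, IsDvdLCM y x (y * t)}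

omit gs in
theorem Tset_mem (P : LatPack M) {x t : M} : t ∈ Tset x ↔ ∃ y, P.comp y x = t := by
  constructor
  · rintro ⟨y, hy⟩
    exact ⟨y, (P.comp_unique hy).symm ▸ rfl⟩
  · rintro ⟨y, rfl⟩
    exact ⟨y, P.isLCM_comp y x⟩

omit gs in
theorem self_mem_Tset (P : LatPack M) (x : M) : x ∈ Tset x :=
  (Tset_mem P).mpr ⟨1, P.comp_one x⟩

theorem Tset_subset_div (P : LatPack M) {x : M} (hx : x ∣ Δ) : Tset x ⊆ {z : M | z ∣ Δ} := by
  intro t ht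
  obtain ⟨y, rfl⟩ := (Tset_mem P).mp ht
  exact comp_delta gs P y x hx

theorem Tset_finite (P : LatPack M) {x : M} (hx : x ∣ Δ) : (Tset x).Finite :=
  gs.div_finite.subset (Tset_subset_div gs P hx)

end GarsTheory
section DGTheory

variable {M : Type*} [Monoid M] {Δ : M} (gs : GarsideStructure M Δ)
include gs

open Classical in
/-- `Δ_a`. -/
noncomputable def deltaOf (a : M) : M :=
  if h : (Tset a).Finite then (packOf gs).foldJoin h.toFinset.toList else 1

theorem deltaOf_lub {a : M} (ha : a ∣ Δ) : IsDvdLUB (Tset a) (deltaOf gs a) := by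
  have hfin : (Tset a).Finite := Tset_finite gs (packOf gs) ha
  rw [deltaOf, dif_pos hfin]
  constructor
  · intro s hs
    exact (packOf gs).dvd_foldJoin (by rw [Finset.mem_toList, Set.Finite.mem_toFinset]; exact hs)
  · intro n hn
    exact (packOf gs).foldJoin_dvd
      (fun s hs => hn s (by rwa [Finset.mem_toList, Set.Finite.mem_toFinset] at hs))

theorem isDeltaOf_deltaOf {a : M} (ha : a ∣ Δ) : IsDeltaOf a (deltaOf gs a) :=
  deltaOf_lub gs ha

theorem deltaOf_eq_of {a d : M} (ha : a ∣ Δ) (h : IsDeltaOf a d) : d = deltaOf gs a :=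
  (packOf gs).lub_unique h (deltaOf_lub gs ha)

theorem dvd_deltaOf {a : M} (ha : a ∣ Δ) : a ∣ deltaOf gs a :=
  (deltaOf_lub gs ha).1 a (self_mem_Tset (packOf gs) a)

theorem comp_dvd_deltaOf {a : M} (ha : a ∣ Δ) (y : M) :
    (packOf gs).comp y a ∣ deltaOf gs a :=
  (deltaOf_lub gs ha).1 _ ((Tset_mem (packOf gs)).mpr ⟨y, rfl⟩)

theorem deltaOf_dvd_delta {a : M} (ha : a ∣ Δ) : deltaOf gs a ∣ Δ :=
  (deltaOf_lub gs ha).2 Δ (fun s hs => Tset_subset_div gs (packOf gs) ha hs)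

theorem comp_deltaOf {a : M} (ha : a ∣ Δ) (y : M) :
    (packOf gs).comp y (deltaOf gs a) ∣ deltaOf gs a := by
  have hfin : (Tset a).Finite := Tset_finite gs (packOf gs) ha
  rw [deltaOf, dif_pos hfin, (packOf gs).comp_foldJoin]
  apply (packOf gs).foldJoin_dvd
  intro s hs
  rw [List.mem_map] at hs
  obtain ⟨t, ht, rfl⟩ := hs
  rw [Finset.mem_toList, Set.Finite.mem_toFinset] at ht
  obtain ⟨z, rfl⟩ := (Tset_mem (packOf gs)).mp ht
  rw [← (packOf gs).comp_mul_left]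
  have h2 : (packOf gs).comp (z * y) a ∈ Tset a := (Tset_mem (packOf gs)).mpr ⟨z * y, rfl⟩
  have := (deltaOf_lub gs ha).1 _ h2
  rwa [deltaOf, dif_pos hfin] at this

theorem atoms_finite : {a : M | MAtom a}.Finite :=
  atoms_finite_of_gen gs.atomic gs.div_finite gs.div_gen

noncomputable def atomsList : List M := (atoms_finite gs).toFinset.toList

theorem atomsList_mem {a : M} : a ∈ atomsList gs ↔ MAtom a := by
  rw [atomsList, Finset.mem_toList, Set.Finite.mem_toFinset]
  rfl

/-- The minimal Garside element `D = ⋁ₐ Δₐ`. -/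
noncomputable def DGdef : M := (packOf gs).foldJoin ((atomsList gs).map (deltaOf gs))

theorem atom_dvd_delta' {a : M} (ha : MAtom a) : a ∣ Δ :=
  atom_dvd_delta gs.atomic gs.div_gen ha

theorem deltaOf_dvd_DG {a : M} (ha : MAtom a) : deltaOf gs a ∣ DGdef gs :=
  (packOf gs).dvd_foldJoin (List.mem_map.mpr ⟨a, (atomsList_mem gs).mpr ha, rfl⟩)

theorem DG_lub : IsDvdLUB {d : M | ∃ a, MAtom a ∧ IsDeltaOf a d} (DGdef gs) := by
  constructor
  · rintro d ⟨a, ha, hd⟩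
    rw [deltaOf_eq_of gs (atom_dvd_delta' gs ha) hd]
    exact deltaOf_dvd_DG gs ha
  · intro n hn
    apply (packOf gs).foldJoin_dvd
    intro s hs
    rw [List.mem_map] at hs
    obtain ⟨a, ha, rfl⟩ := hs
    have ha' : MAtom a := (atomsList_mem gs).mp ha
    exact hn _ ⟨a, ha', isDeltaOf_deltaOf gs (atom_dvd_delta' gs ha')⟩

theorem atom_dvd_DG {a : M} (ha : MAtom a) : a ∣ DGdef gs :=
  (dvd_deltaOf gs (atom_dvd_delta' gs ha)).trans (deltaOf_dvd_DG gs ha)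

theorem comp_atom_dvd_DG {a : M} (ha : MAtom a) (y : M) :
    (packOf gs).comp y a ∣ DGdef gs :=
  (comp_dvd_deltaOf gs (atom_dvd_delta' gs ha) y).trans (deltaOf_dvd_DG gs ha)

theorem star_DG : ∀ y, (packOf gs).comp y (DGdef gs) ∣ DGdef gs := by
  intro y
  rw [DGdef, (packOf gs).comp_foldJoin]
  apply (packOf gs).foldJoin_dvd
  intro s hs
  rw [List.mem_map] at hs
  obtain ⟨s', hs', rfl⟩ := hs
  rw [List.mem_map] at hs'
  obtain ⟨a, ha, rfl⟩ := hs'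
  have ha' : MAtom a := (atomsList_mem gs).mp ha
  exact (comp_deltaOf gs (atom_dvd_delta' gs ha') y).trans (deltaOf_dvd_DG gs ha')

theorem DG_dvd_delta : DGdef gs ∣ Δ :=
  (packOf gs).foldJoin_dvd (by
    intro s hs
    rw [List.mem_map] at hs
    obtain ⟨a, ha, rfl⟩ := hs
    exact deltaOf_dvd_delta gs (atom_dvd_delta' gs ((atomsList_mem gs).mp ha)))

theorem balanced_DG : ∀ x, x ∣ DGdef gs ↔ RDvd x (DGdef gs) :=
  (packOf gs).balanced_of (divisors_finite gs.atomic (atoms_finite gs) _) (star_DG gs)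

theorem rstar_DG : ∀ y, RDvd ((packOf gs).rcomp y (DGdef gs)) (DGdef gs) :=
  (packOf gs).rstar_of (balanced_DG gs)
    (fun a ha => (balanced_DG gs a).mp (atom_dvd_DG gs ha))

theorem rcomp_atom_rdvd_DG {b : M} (hb : MAtom b) (y : M) :
    RDvd ((packOf gs).rcomp y b) (DGdef gs) :=
  rdvd_trans ((packOf gs).rcomp_mono y ((balanced_DG gs b).mp (atom_dvd_DG gs hb)))
    (rstar_DG gs y)

/-- Right-handed minimal element. -/
def rTset (a : M) : Set M := Set.range fun y => (packOf gs).rcomp y a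

theorem rdelta_fin {a : M} (ha : MAtom a) : (rTset gs a).Finite := by
  apply (rdivisors_finite gs.atomic (atoms_finite gs) Δ).subset
  rintro t ⟨y, rfl⟩
  exact rcomp_delta gs (packOf gs) y a ((gs.balanced a).mp (atom_dvd_delta' gs ha))

open Classical in
noncomputable def rdeltaOf (a : M) : M :=
  if h : (rTset gs a).Finite then (packOf gs).rfoldJoin h.toFinset.toList else 1

theorem rdeltaOf_lub {a : M} (ha : MAtom a) :
    (∀ s ∈ rTset gs a, RDvd s (rdeltaOf gs a)) ∧
      ∀ n, (∀ s ∈ rTset gs a, RDvd s n) → RDvd (rdeltaOf gs a) n := by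
  have hfin := rdelta_fin gs ha
  rw [rdeltaOf, dif_pos hfin]
  constructor
  · intro s hs
    exact (packOf gs).rdvd_rfoldJoin (by rw [Finset.mem_toList, Set.Finite.mem_toFinset]; exact hs)
  · intro n hn
    exact (packOf gs).rfoldJoin_rdvd
      (fun s hs => hn s (by rwa [Finset.mem_toList, Set.Finite.mem_toFinset] at hs))

noncomputable def DPdef : M := (packOf gs).rfoldJoin ((atomsList gs).map (rdeltaOf gs))

theorem rdeltaOf_rdvd_DP {a : M} (ha : MAtom a) : RDvd (rdeltaOf gs a) (DPdef gs) :=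
  (packOf gs).rdvd_rfoldJoin (List.mem_map.mpr ⟨a, (atomsList_mem gs).mpr ha, rfl⟩)

theorem atom_rdvd_DP {a : M} (ha : MAtom a) : RDvd a (DPdef gs) := by
  have h1 : a ∈ rTset gs a := ⟨1, (packOf gs).rcomp_one a⟩
  exact rdvd_trans ((rdeltaOf_lub gs ha).1 a h1) (rdeltaOf_rdvd_DP gs ha)

theorem rcomp_rdeltaOf {a : M} (ha : MAtom a) (y : M) :
    RDvd ((packOf gs).rcomp y (rdeltaOf gs a)) (rdeltaOf gs a) := by
  have hfin := rdelta_fin gs ha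
  rw [rdeltaOf, dif_pos hfin, (packOf gs).rcomp_rfoldJoin]
  apply (packOf gs).rfoldJoin_rdvd
  intro s hs
  rw [List.mem_map] at hs
  obtain ⟨t, ht, rfl⟩ := hs
  rw [Finset.mem_toList, Set.Finite.mem_toFinset] at ht
  obtain ⟨z, rfl⟩ := ht
  rw [← (packOf gs).rcomp_mul_right]
  have h2 : (packOf gs).rcomp (y * z) a ∈ rTset gs a := ⟨y * z, rfl⟩
  have := (rdeltaOf_lub gs ha).1 _ h2
  rwa [rdeltaOf, dif_pos hfin] at this

theorem rstar_DP : ∀ y, RDvd ((packOf gs).rcomp y (DPdef gs)) (DPdef gs) := by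
  intro y
  rw [DPdef, (packOf gs).rcomp_rfoldJoin]
  apply (packOf gs).rfoldJoin_rdvd
  intro s hs
  rw [List.mem_map] at hs
  obtain ⟨s', hs', rfl⟩ := hs
  rw [List.mem_map] at hs'
  obtain ⟨a, ha, rfl⟩ := hs'
  have ha' : MAtom a := (atomsList_mem gs).mp ha
  exact rdvd_trans (rcomp_rdeltaOf gs ha' y) (rdeltaOf_rdvd_DP gs ha')

theorem rbalanced_DP : ∀ x, RDvd x (DPdef gs) ↔ x ∣ DPdef gs :=
  (packOf gs).rbalanced_of (rdivisors_finite gs.atomic (atoms_finite gs) _) (rstar_DP gs)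

theorem lstar_DP : ∀ y, (packOf gs).comp y (DPdef gs) ∣ DPdef gs :=
  (packOf gs).lstar_of (rbalanced_DP gs)
    (fun a ha => (rbalanced_DP gs a).mp (atom_rdvd_DP gs ha))

theorem DG_eq_DP : DGdef gs = DPdef gs := by
  apply (packOf gs).antisymm
  · -- DG ∣ DP
    apply (packOf gs).foldJoin_dvd
    intro s hs
    rw [List.mem_map] at hs
    obtain ⟨a, ha, rfl⟩ := hs
    have ha' : MAtom a := (atomsList_mem gs).mp ha
    have hfin : (Tset a).Finite := Tset_finite gs (packOf gs) (atom_dvd_delta' gs ha')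
    rw [deltaOf, dif_pos hfin]
    apply (packOf gs).foldJoin_dvd
    intro t ht
    rw [Finset.mem_toList, Set.Finite.mem_toFinset] at ht
    obtain ⟨z, rfl⟩ := (Tset_mem (packOf gs)).mp ht
    have haP : a ∣ DPdef gs := (rbalanced_DP gs a).mp (atom_rdvd_DP gs ha')
    exact ((packOf gs).comp_mono z haP).trans (lstar_DP gs z)
  · -- DP ∣ DG
    have hr : RDvd (DPdef gs) (DGdef gs) := by
      apply (packOf gs).rfoldJoin_rdvd
      intro s hs
      rw [List.mem_map] at hs
      obtain ⟨a, ha, rfl⟩ := hs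
      have ha' : MAtom a := (atomsList_mem gs).mp ha
      have hfin := rdelta_fin gs ha'
      rw [rdeltaOf, dif_pos hfin]
      apply (packOf gs).rfoldJoin_rdvd
      intro t ht
      rw [Finset.mem_toList, Set.Finite.mem_toFinset] at ht
      obtain ⟨z, rfl⟩ := ht
      exact rcomp_atom_rdvd_DG gs ha' z
    exact (balanced_DG gs _).mpr hr

end DGTheory
section ZSLayer1

variable {K : Type*} [Monoid K] {G H : Submonoid K} (zs : ZS K G H)
include zs

/-- GH decomposition. -/
noncomputable def pGH (k : K) : G × H := (zs.exGH k).choose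

/-- HG decomposition. -/
noncomputable def pHG (k : K) : H × G := (zs.exHG k).choose

theorem pGH_spec (k : K) : ((pGH zs k).1 : K) * ((pGH zs k).2 : K) = k :=
  (zs.exGH k).choose_spec.1

theorem pHG_spec (k : K) : ((pHG zs k).1 : K) * ((pHG zs k).2 : K) = k :=
  (zs.exHG k).choose_spec.1

theorem pGH_unique {g : G} {h : H} {k : K} (hk : (g : K) * (h : K) = k) :
    pGH zs k = (g, h) :=
  ((zs.exGH k).choose_spec.2 (g, h) hk).symm

theorem pHG_unique {h : H} {g : G} {k : K} (hk : (h : K) * (g : K) = k) :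
    pHG zs k = (h, g) :=
  ((zs.exHG k).choose_spec.2 (h, g) hk).symm

theorem pGH_coe_g (g : G) : pGH zs (g : K) = (g, 1) := pGH_unique zs (by simp)
theorem pGH_coe_h (h : H) : pGH zs (h : K) = (1, h) := pGH_unique zs (by simp)
theorem pHG_coe_g (g : G) : pHG zs (g : K) = (1, g) := pHG_unique zs (by simp)
theorem pHG_coe_h (h : H) : pHG zs (h : K) = (h, 1) := pHG_unique zs (by simp)
theorem pGH_one : pGH zs (1 : K) = (1, 1) := pGH_unique zs (by simp)
theorem pHG_one : pHG zs (1 : K) = (1, 1) := pHG_unique zs (by simp)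

theorem pGH_mul_g (g : G) (k : K) :
    pGH zs ((g : K) * k) = (g * (pGH zs k).1, (pGH zs k).2) := by
  apply pGH_unique
  rw [Submonoid.coe_mul, mul_assoc, pGH_spec]

theorem pGH_mul_h (k : K) (h : H) :
    pGH zs (k * (h : K)) = ((pGH zs k).1, (pGH zs k).2 * h) := by
  apply pGH_unique
  rw [Submonoid.coe_mul, ← mul_assoc, pGH_spec]

theorem pHG_mul_h (h : H) (k : K) :
    pHG zs ((h : K) * k) = (h * (pHG zs k).1, (pHG zs k).2) := by
  apply pHG_unique
  rw [Submonoid.coe_mul, mul_assoc, pHG_spec]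

theorem pHG_mul_g (k : K) (g : G) :
    pHG zs (k * (g : K)) = ((pHG zs k).1, (pHG zs k).2 * g) := by
  apply pHG_unique
  rw [Submonoid.coe_mul, ← mul_assoc, pHG_spec]

theorem rtr_def (h : H) (g : G) : zs.rtr h g = (pGH zs ((h : K) * (g : K))).1 := rfl
theorem rtl_def (h : H) (g : G) : zs.rtl h g = (pGH zs ((h : K) * (g : K))).2 := rfl
theorem ltr_def (g : G) (h : H) : zs.ltr g h = (pHG zs ((g : K) * (h : K))).1 := rfl
theorem ltl_def (g : G) (h : H) : zs.ltl g h = (pHG zs ((g : K) * (h : K))).2 := rfl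

theorem rtr_rtl_spec (h : H) (g : G) :
    ((zs.rtr h g : K)) * ((zs.rtl h g : K)) = (h : K) * (g : K) :=
  pGH_spec zs _

theorem ltr_ltl_spec (g : G) (h : H) :
    ((zs.ltr g h : K)) * ((zs.ltl g h : K)) = (g : K) * (h : K) :=
  pHG_spec zs _

theorem rtr_rtl_unique {h : H} {g : G} {g' : G} {h' : H}
    (he : (g' : K) * (h' : K) = (h : K) * (g : K)) :
    zs.rtr h g = g' ∧ zs.rtl h g = h' := by
  have := pGH_unique zs he
  rw [rtr_def, rtl_def, this]
  exact ⟨rfl, rfl⟩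

theorem ltr_ltl_unique {g : G} {h : H} {h' : H} {g' : G}
    (he : (h' : K) * (g' : K) = (g : K) * (h : K)) :
    zs.ltr g h = h' ∧ zs.ltl g h = g' := by
  have := pHG_unique zs he
  rw [ltr_def, ltl_def, this]
  exact ⟨rfl, rfl⟩

theorem rtr_one_g (h : H) : zs.rtr h 1 = 1 ∧ zs.rtl h 1 = h :=
  rtr_rtl_unique zs (by simp)

theorem rtr_one_h (g : G) : zs.rtr 1 g = g ∧ zs.rtl 1 g = 1 :=
  rtr_rtl_unique zs (by simp)

theorem ltr_one_h (g : G) : zs.ltr g 1 = 1 ∧ zs.ltl g 1 = g :=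
  ltr_ltl_unique zs (by simp)

theorem ltr_one_g (h : H) : zs.ltr 1 h = h ∧ zs.ltl 1 h = 1 :=
  ltr_ltl_unique zs (by simp)

theorem rtr_mul_g (h : H) (g₁ g₂ : G) :
    zs.rtr h (g₁ * g₂) = zs.rtr h g₁ * zs.rtr (zs.rtl h g₁) g₂ ∧
      zs.rtl h (g₁ * g₂) = zs.rtl (zs.rtl h g₁) g₂ := by
  have he : ((zs.rtr h g₁ * zs.rtr (zs.rtl h g₁) g₂ : G) : K) *
      ((zs.rtl (zs.rtl h g₁) g₂ : H) : K) = (h : K) * ((g₁ * g₂ : G) : K) := by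
    push_cast
    rw [mul_assoc (zs.rtr h g₁ : K), rtr_rtl_spec, ← mul_assoc, rtr_rtl_spec, mul_assoc]
  exact rtr_rtl_unique zs he

theorem rtr_mul_h (h₁ h₂ : H) (g : G) :
    zs.rtr (h₁ * h₂) g = zs.rtr h₁ (zs.rtr h₂ g) ∧
      zs.rtl (h₁ * h₂) g = zs.rtl h₁ (zs.rtr h₂ g) * zs.rtl h₂ g := by
  have he : ((zs.rtr h₁ (zs.rtr h₂ g) : G) : K) *
      ((zs.rtl h₁ (zs.rtr h₂ g) * zs.rtl h₂ g : H) : K) = ((h₁ * h₂ : H) : K) * (g : K) := by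
    push_cast
    rw [← mul_assoc, rtr_rtl_spec, mul_assoc, rtr_rtl_spec, mul_assoc]
  exact rtr_rtl_unique zs he

theorem ltr_mul_h (g : G) (h₁ h₂ : H) :
    zs.ltr g (h₁ * h₂) = zs.ltr g h₁ * zs.ltr (zs.ltl g h₁) h₂ ∧
      zs.ltl g (h₁ * h₂) = zs.ltl (zs.ltl g h₁) h₂ := by
  have he : ((zs.ltr g h₁ * zs.ltr (zs.ltl g h₁) h₂ : H) : K) *
      ((zs.ltl (zs.ltl g h₁) h₂ : G) : K) = (g : K) * ((h₁ * h₂ : H) : K) := by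
    push_cast
    rw [mul_assoc (zs.ltr g h₁ : K), ltr_ltl_spec, ← mul_assoc, ltr_ltl_spec, mul_assoc]
  exact ltr_ltl_unique zs he

theorem ltr_mul_g (g₁ g₂ : G) (h : H) :
    zs.ltr (g₁ * g₂) h = zs.ltr g₁ (zs.ltr g₂ h) ∧
      zs.ltl (g₁ * g₂) h = zs.ltl g₁ (zs.ltr g₂ h) * zs.ltl g₂ h := by
  have he : ((zs.ltr g₁ (zs.ltr g₂ h) : H) : K) *
      ((zs.ltl g₁ (zs.ltr g₂ h) * zs.ltl g₂ h : G) : K) = ((g₁ * g₂ : G) : K) * (h : K) := by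
    push_cast
    rw [← mul_assoc, ltr_ltl_spec, mul_assoc, ltr_ltl_spec, mul_assoc]
  exact ltr_ltl_unique zs he

/-- Inverse pair identities. -/
theorem ltr_rtr (h : H) (g : G) :
    zs.ltr (zs.rtr h g) (zs.rtl h g) = h ∧ zs.ltl (zs.rtr h g) (zs.rtl h g) = g :=
  ltr_ltl_unique zs (rtr_rtl_spec zs h g).symm

theorem rtr_ltr (g : G) (h : H) :
    zs.rtr (zs.ltr g h) (zs.ltl g h) = g ∧ zs.rtl (zs.ltr g h) (zs.ltl g h) = h :=
  rtr_rtl_unique zs (ltr_ltl_spec zs g h).symm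

/-- Nondegeneracy. -/
theorem rtr_eq_one {h : H} {g : G} (he : zs.rtr h g = 1) : g = 1 := by
  have h1 : (h : K) * (g : K) = ((zs.rtl h g : H) : K) := by
    rw [← rtr_rtl_spec zs h g, he]
    simp
  have h2 := pHG_unique zs (k := ((zs.rtl h g : H) : K)) (h := h) (g := g) h1
  rw [pHG_coe_h] at h2
  exact (Prod.ext_iff.mp h2.symm).2

theorem rtl_eq_one {h : H} {g : G} (he : zs.rtl h g = 1) : h = 1 := by
  have h1 : (h : K) * (g : K) = ((zs.rtr h g : G) : K) := by
    rw [← rtr_rtl_spec zs h g, he]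
    simp
  have h2 := pHG_unique zs (k := ((zs.rtr h g : G) : K)) (h := h) (g := g) h1
  rw [pHG_coe_g] at h2
  exact (Prod.ext_iff.mp h2.symm).1

theorem ltr_eq_one {g : G} {h : H} (he : zs.ltr g h = 1) : h = 1 := by
  have h1 : (g : K) * (h : K) = ((zs.ltl g h : G) : K) := by
    rw [← ltr_ltl_spec zs g h, he]
    simp
  have h2 := pGH_unique zs (k := ((zs.ltl g h : G) : K)) (g := g) (h := h) h1
  rw [pGH_coe_g] at h2
  exact (Prod.ext_iff.mp h2.symm).2

theorem ltl_eq_one {g : G} {h : H} (he : zs.ltl g h = 1) : g = 1 := by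
  have h1 : (g : K) * (h : K) = ((zs.ltr g h : H) : K) := by
    rw [← ltr_ltl_spec zs g h, he]
    simp
  have h2 := pGH_unique zs (k := ((zs.ltr g h : H) : K)) (g := g) (h := h) h1
  rw [pGH_coe_h] at h2
  exact (Prod.ext_iff.mp h2.symm).1

end ZSLayer1
section ZSLayer2

variable {K : Type*} [Monoid K] {G H : Submonoid K} (zs : ZS K G H)
  {ΔG : G} {ΔH : H} (gsG : GarsideStructure G ΔG) (gsH : GarsideStructure H ΔH)
include zs

theorem pGH_h_mul (h : H) (k : K) :
    pGH zs ((h : K) * k) =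
      (zs.rtr h (pGH zs k).1, zs.rtl h (pGH zs k).1 * (pGH zs k).2) := by
  apply pGH_unique
  push_cast
  rw [← mul_assoc, rtr_rtl_spec, mul_assoc, pGH_spec]

theorem pHG_g_mul (g : G) (k : K) :
    pHG zs ((g : K) * k) =
      (zs.ltr g (pHG zs k).1, zs.ltl g (pHG zs k).1 * (pHG zs k).2) := by
  apply pHG_unique
  push_cast
  rw [← mul_assoc, ltr_ltl_spec, mul_assoc, pHG_spec]

include gsG gsH

/-- Left cancellativity of `K`. -/
theorem K_lc : ∀ a b c : K, a * b = a * c → b = c := by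
  have hgc : ∀ (g : G) (b c : K), (g : K) * b = (g : K) * c → b = c := by
    intro g b c h
    have h2 := (pGH_mul_g zs g b).symm.trans ((congrArg (pGH zs) h).trans (pGH_mul_g zs g c))
    have h3 := congrArg Prod.fst h2
    have h4 := congrArg Prod.snd h2
    simp only at h3 h4
    have h5 : (pGH zs b).1 = (pGH zs c).1 := gsG.mul_left_cancel g _ _ h3
    rw [← pGH_spec zs b, ← pGH_spec zs c, h5, h4]
  have hhc : ∀ (h : H) (b c : K), (h : K) * b = (h : K) * c → b = c := by
    intro h b c hh
    have h2 := (pHG_mul_h zs h b).symm.trans ((congrArg (pHG zs) hh).trans (pHG_mul_h zs h c))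
    have h3 := congrArg Prod.fst h2
    have h4 := congrArg Prod.snd h2
    simp only at h3 h4
    have h5 : (pHG zs b).1 = (pHG zs c).1 := gsH.mul_left_cancel h _ _ h3
    rw [← pHG_spec zs b, ← pHG_spec zs c, h5, h4]
  intro a b c h
  rw [← pGH_spec zs a] at h
  rw [mul_assoc, mul_assoc] at h
  exact hhc _ _ _ (hgc _ _ _ h)

/-- Right cancellativity of `K`. -/
theorem K_rc : ∀ a b c : K, b * a = c * a → b = c := by
  have hgc : ∀ (g : G) (b c : K), b * (g : K) = c * (g : K) → b = c := by
    intro g b c h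
    have h2 := (pHG_mul_g zs b g).symm.trans ((congrArg (pHG zs) h).trans (pHG_mul_g zs c g))
    have h3 := congrArg Prod.fst h2
    have h4 := congrArg Prod.snd h2
    simp only at h3 h4
    have h5 : (pHG zs b).2 = (pHG zs c).2 := gsG.mul_right_cancel g _ _ h4
    rw [← pHG_spec zs b, ← pHG_spec zs c, h5, h3]
  have hhc : ∀ (h : H) (b c : K), b * (h : K) = c * (h : K) → b = c := by
    intro h b c hh
    have h2 := (pGH_mul_h zs b h).symm.trans ((congrArg (pGH zs) hh).trans (pGH_mul_h zs c h))
    have h3 := congrArg Prod.fst h2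
    have h4 := congrArg Prod.snd h2
    simp only at h3 h4
    have h5 : (pGH zs b).2 = (pGH zs c).2 := gsH.mul_right_cancel h _ _ h4
    rw [← pGH_spec zs b, ← pGH_spec zs c, h5, h3]
  intro a b c h
  rw [← pHG_spec zs a] at h
  rw [← mul_assoc, ← mul_assoc] at h
  exact hhc _ _ _ (hgc _ _ _ h)

/-- Atoms of `G` are atoms of `K`. -/
theorem atomG_atomK {a : G} (ha : MAtom a) : MAtom (a : K) := by
  constructor
  · intro h1
    exact ha.1 (by exact_mod_cast h1)
  · intro u v huv
    have hu : u = ((pGH zs u).1 : K) * ((pGH zs u).2 : K) := (pGH_spec zs u).symm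
    have hv : v = ((pHG zs v).1 : K) * ((pHG zs v).2 : K) := (pHG_spec zs v).symm
    set gu := (pGH zs u).1
    set hu' := (pGH zs u).2
    set hv' := (pHG zs v).1
    set gv := (pHG zs v).2
    have hcomp : (a : K) = ((gu * zs.rtr (hu' * hv') gv : G) : K) *
        ((zs.rtl (hu' * hv') gv : H) : K) := by
      have key : ((gu * zs.rtr (hu' * hv') gv : G) : K) *
          ((zs.rtl (hu' * hv') gv : H) : K) =
          (gu : K) * (hu' : K) * ((hv' : K) * (gv : K)) := by
        push_cast
        rw [mul_assoc ((gu : K)), rtr_rtl_spec]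
        simp [mul_assoc]
      rw [huv, hu, hv, key]
    have h2 := (pGH_unique zs hcomp.symm).symm.trans (pGH_coe_g zs a)
    have h3 := congrArg Prod.fst h2
    have h4 := congrArg Prod.snd h2
    simp only at h3 h4
    have h5 : hu' * hv' = 1 := rtl_eq_one zs h4
    obtain ⟨h6, h7⟩ := eq_one_of_mul_eq_one gsH.atomic h5
    rw [h6, h7, one_mul] at h3
    rw [(rtr_one_h zs gv).1] at h3
    rcases ha.2 _ _ h3.symm with h8 | h8
    · left
      rw [hu, h6]
      simp [h8]
    · right
      rw [hv, h7]
      simp [h8]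

/-- Atoms of `H` are atoms of `K`. -/
theorem atomH_atomK {b : H} (hb : MAtom b) : MAtom (b : K) := by
  constructor
  · intro h1
    exact hb.1 (by exact_mod_cast h1)
  · intro u v huv
    have hu : u = ((pGH zs u).1 : K) * ((pGH zs u).2 : K) := (pGH_spec zs u).symm
    have hv : v = ((pHG zs v).1 : K) * ((pHG zs v).2 : K) := (pHG_spec zs v).symm
    set gu := (pGH zs u).1
    set hu' := (pGH zs u).2
    set hv' := (pHG zs v).1
    set gv := (pHG zs v).2
    have hcomp : (b : K) = ((gu * zs.rtr (hu' * hv') gv : G) : K) *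
        ((zs.rtl (hu' * hv') gv : H) : K) := by
      have key : ((gu * zs.rtr (hu' * hv') gv : G) : K) *
          ((zs.rtl (hu' * hv') gv : H) : K) =
          (gu : K) * (hu' : K) * ((hv' : K) * (gv : K)) := by
        push_cast
        rw [mul_assoc ((gu : K)), rtr_rtl_spec]
        simp [mul_assoc]
      rw [huv, hu, hv, key]
    have h2 := (pGH_unique zs hcomp.symm).symm.trans (pGH_coe_h zs b)
    have h3 := congrArg Prod.fst h2
    have h4 := congrArg Prod.snd h2
    simp only at h3 h4
    obtain ⟨h5, h6⟩ := eq_one_of_mul_eq_one gsG.atomic h3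
    have h7 : gv = 1 := rtr_eq_one zs h6
    rw [h7] at h4
    rw [(rtr_one_g zs (hu' * hv')).2] at h4
    rcases hb.2 _ _ h4.symm with h8 | h8
    · left
      rw [hu, h5, h8]
      simp
    · right
      rw [hv, h8, h7]
      simp

/-- Atoms of `K` come from `G` or `H`. -/
theorem atomK_cases {x : K} (hx : MAtom x) :
    (∃ a : G, MAtom a ∧ x = (a : K)) ∨ (∃ b : H, MAtom b ∧ x = (b : K)) := by
  obtain ⟨g0, h0, hxd⟩ : ∃ (g0 : G) (h0 : H), (g0 : K) * (h0 : K) = x :=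
    ⟨_, _, pGH_spec zs x⟩
  rcases hx.2 _ _ hxd.symm with h1 | h1
  · right
    have hxe : x = (h0 : K) := by rw [← hxd, h1, one_mul]
    refine ⟨h0, ⟨?_, ?_⟩, hxe⟩
    · intro h2
      exact hx.1 (by rw [hxe, h2]; simp)
    · intro u v huv
      have : x = (u : K) * (v : K) := by rw [hxe, huv, Submonoid.coe_mul]
      rcases hx.2 _ _ this with h3 | h3
      · left; exact_mod_cast h3
      · right; exact_mod_cast h3
  · left
    have hxe : x = (g0 : K) := by rw [← hxd, h1, mul_one]
    refine ⟨g0, ⟨?_, ?_⟩, hxe⟩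
    · intro h2
      exact hx.1 (by rw [hxe, h2]; simp)
    · intro u v huv
      have : x = (u : K) * (v : K) := by rw [hxe, huv, Submonoid.coe_mul]
      rcases hx.2 _ _ this with h3 | h3
      · left; exact_mod_cast h3
      · right; exact_mod_cast h3

end ZSLayer2
section ZSLayer3

variable {K : Type*} [Monoid K] {G H : Submonoid K} (zs : ZS K G H)
  {ΔG : G} {ΔH : H} (gsG : GarsideStructure G ΔG) (gsH : GarsideStructure H ΔH)
include zs gsG gsH

theorem lenIneq : ∀ (h : H), h ≠ 1 → ∀ g : G,
    1 + mlen g ≤ mlen (zs.rtr h g) + mlen (zs.rtl h g) := by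
  suffices Key : ∀ n, ∀ (h : H), h ≠ 1 → ∀ g : G, mlen g ≤ n →
      1 + mlen g ≤ mlen (zs.rtr h g) + mlen (zs.rtl h g) by
    intro h hh g; exact Key (mlen g) h hh g le_rfl
  intro n
  induction n with
  | zero =>
    intro h hh g hg
    have hg1 : g = 1 := mlen_eq_zero gsG.atomic (Nat.le_zero.mp hg)
    subst hg1
    rw [(rtr_one_g zs h).1, (rtr_one_g zs h).2]
    have := mlen_pos gsH.atomic hh
    have := mlen_one (M := G) gsG.atomic
    omega
  | succ n ih =>
    intro h hh g hg
    by_cases hg1 : g = 1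
    · subst hg1
      rw [(rtr_one_g zs h).1, (rtr_one_g zs h).2]
      have := mlen_pos gsH.atomic hh
      have := mlen_one (M := G) gsG.atomic
      omega
    · obtain ⟨b, g₂, hb, rfl, hlen⟩ := peel_left gsG.atomic hg1
      rw [(rtr_mul_g zs h b g₂).1, (rtr_mul_g zs h b g₂).2]
      set h₂ := zs.rtl h b with hh₂
      have hh₂ne : h₂ ≠ 1 := fun he => hh (rtl_eq_one zs he)
      have hrb : zs.rtr h b ≠ 1 := fun he => hb.1 (rtr_eq_one zs he)
      have h1 : mlen (zs.rtr h b) + mlen (zs.rtr h₂ g₂) ≤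
          mlen (zs.rtr h b * zs.rtr h₂ g₂) := mlen_superadd gsG.atomic _ _
      have h2 : 1 ≤ mlen (zs.rtr h b) := mlen_pos gsG.atomic hrb
      have h3 := ih h₂ hh₂ne g₂ (by omega)
      omega

theorem lenIneq' : ∀ (g : G), g ≠ 1 → ∀ h : H,
    1 + mlen h ≤ mlen (zs.ltr g h) + mlen (zs.ltl g h) := by
  suffices Key : ∀ n, ∀ (g : G), g ≠ 1 → ∀ h : H, mlen h ≤ n →
      1 + mlen h ≤ mlen (zs.ltr g h) + mlen (zs.ltl g h) by
    intro g hgne h; exact Key (mlen h) g hgne h le_rfl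
  intro n
  induction n with
  | zero =>
    intro g hgne h hh
    have hh1 : h = 1 := mlen_eq_zero gsH.atomic (Nat.le_zero.mp hh)
    subst hh1
    rw [(ltr_one_h zs g).1, (ltr_one_h zs g).2]
    have := mlen_pos gsG.atomic hgne
    have := mlen_one (M := H) gsH.atomic
    omega
  | succ n ih =>
    intro g hgne h hh
    by_cases hh1 : h = 1
    · subst hh1
      rw [(ltr_one_h zs g).1, (ltr_one_h zs g).2]
      have := mlen_pos gsG.atomic hgne
      have := mlen_one (M := H) gsH.atomic
      omega
    · obtain ⟨b, h₂, hb, rfl, hlen⟩ := peel_left gsH.atomic hh1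
      rw [(ltr_mul_h zs g b h₂).1, (ltr_mul_h zs g b h₂).2]
      set g₂ := zs.ltl g b with hg₂
      have hg₂ne : g₂ ≠ 1 := fun he => hgne (ltl_eq_one zs he)
      have hgb : zs.ltr g b ≠ 1 := fun he => hb.1 (ltr_eq_one zs he)
      have h1 : mlen (zs.ltr g b) + mlen (zs.ltr g₂ h₂) ≤
          mlen (zs.ltr g b * zs.ltr g₂ h₂) := mlen_superadd gsH.atomic _ _
      have h2 : 1 ≤ mlen (zs.ltr g b) := mlen_pos gsH.atomic hgb
      have h3 := ih g₂ hg₂ne h₂ (by omega)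
      omega

omit gsG gsH in
/-- `μ` and `ν`. -/
noncomputable def muK (k : K) : ℕ := mlen (pGH zs k).1 + mlen (pGH zs k).2

omit gsG gsH in
noncomputable def nuK (k : K) : ℕ := mlen (pHG zs k).1 + mlen (pHG zs k).2

theorem lenBound : ∀ (l : List K), (∀ a ∈ l, MAtom a) → l.length ≤ muK zs l.prod := by
  intro l
  induction l with
  | nil => simp
  | cons x t ih =>
    intro hl
    rw [List.prod_cons, List.length_cons]
    have ht := ih (fun a ha => hl a (List.mem_cons_of_mem x ha))
    rcases atomK_cases zs gsG gsH (hl x List.mem_cons_self) with ⟨a, ha, rfl⟩ | ⟨b, hb, rfl⟩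
    · rw [muK, pGH_mul_g]
      dsimp only
      have h1 := mlen_superadd gsG.atomic a (pGH zs t.prod).1
      have h2 : mlen a = 1 := mlen_atom gsG.atomic ha
      rw [muK] at ht
      omega
    · rw [muK, pGH_h_mul]
      dsimp only
      have hbne : b ≠ 1 := hb.1
      have h1 := lenIneq zs gsG gsH b hbne (pGH zs t.prod).1
      have h2 := mlen_superadd gsH.atomic (zs.rtl b (pGH zs t.prod).1) (pGH zs t.prod).2
      rw [muK] at ht
      omega

theorem lenBound' : ∀ (l : List K), (∀ a ∈ l, MAtom a) → l.length ≤ nuK zs l.prod := by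
  intro l
  induction l with
  | nil => simp
  | cons x t ih =>
    intro hl
    rw [List.prod_cons, List.length_cons]
    have ht := ih (fun a ha => hl a (List.mem_cons_of_mem x ha))
    rcases atomK_cases zs gsG gsH (hl x List.mem_cons_self) with ⟨a, ha, rfl⟩ | ⟨b, hb, rfl⟩
    · rw [nuK, pHG_g_mul]
      dsimp only
      have hane : a ≠ 1 := ha.1
      have h1 := lenIneq' zs gsG gsH a hane (pHG zs t.prod).1
      have h2 := mlen_superadd gsG.atomic (zs.ltl a (pHG zs t.prod).1) (pHG zs t.prod).2
      rw [nuK] at ht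
      omega
    · rw [nuK, pHG_mul_h]
      dsimp only
      have h1 := mlen_superadd gsH.atomic b (pHG zs t.prod).1
      have h2 : mlen b = 1 := mlen_atom gsH.atomic hb
      rw [nuK] at ht
      omega

theorem exDecompMu (k : K) :
    ∃ l : List K, (∀ a ∈ l, MAtom a) ∧ l.prod = k ∧ l.length = muK zs k := by
  obtain ⟨lg, hg1, hg2, hg3⟩ := mlen_spec gsG.atomic (pGH zs k).1
  obtain ⟨lh, hh1, hh2, hh3⟩ := mlen_spec gsH.atomic (pGH zs k).2
  refine ⟨lg.map ⇑G.subtype ++ lh.map ⇑H.subtype, ?_, ?_, ?_⟩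
  · intro a ha
    rcases List.mem_append.mp ha with h | h
    · obtain ⟨a', ha', rfl⟩ := List.mem_map.mp h
      exact atomG_atomK zs gsG gsH (hg1 a' ha')
    · obtain ⟨b', hb', rfl⟩ := List.mem_map.mp h
      exact atomH_atomK zs gsG gsH (hh1 b' hb')
  · rw [List.prod_append, List.prod_hom lg G.subtype, List.prod_hom lh H.subtype,
      hg2, hh2]
    exact pGH_spec zs k
  · rw [List.length_append, List.length_map, List.length_map, hg3, hh3, muK]

theorem exDecompNu (k : K) :
    ∃ l : List K, (∀ a ∈ l, MAtom a) ∧ l.prod = k ∧ l.length = nuK zs k := by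
  obtain ⟨lh, hh1, hh2, hh3⟩ := mlen_spec gsH.atomic (pHG zs k).1
  obtain ⟨lg, hg1, hg2, hg3⟩ := mlen_spec gsG.atomic (pHG zs k).2
  refine ⟨lh.map ⇑H.subtype ++ lg.map ⇑G.subtype, ?_, ?_, ?_⟩
  · intro a ha
    rcases List.mem_append.mp ha with h | h
    · obtain ⟨b', hb', rfl⟩ := List.mem_map.mp h
      exact atomH_atomK zs gsG gsH (hh1 b' hb')
    · obtain ⟨a', ha', rfl⟩ := List.mem_map.mp h
      exact atomG_atomK zs gsG gsH (hg1 a' ha')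
  · rw [List.prod_append, List.prod_hom lg G.subtype, List.prod_hom lh H.subtype,
      hg2, hh2]
    exact pHG_spec zs k
  · rw [List.length_append, List.length_map, List.length_map, hh3, hg3, nuK]

theorem atomicK : Atomic K := by
  constructor
  · intro k
    obtain ⟨l, h1, h2, _⟩ := exDecompMu zs gsG gsH k
    exact ⟨l, h1, h2⟩
  · intro k
    exact ⟨muK zs k, fun l hl hp => hp ▸ lenBound zs gsG gsH l hl⟩

theorem mlenK_mu (k : K) : mlen k = muK zs k := by
  apply le_antisymm
  · obtain ⟨l, h1, h2, h3⟩ := mlen_spec (atomicK zs gsG gsH) k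
    rw [← h3, ← h2]
    exact lenBound zs gsG gsH l h1
  · obtain ⟨l, h1, h2, h3⟩ := exDecompMu zs gsG gsH k
    rw [← h3]
    exact le_mlen (atomicK zs gsG gsH) h1 h2

theorem mlenK_nu (k : K) : mlen k = nuK zs k := by
  apply le_antisymm
  · obtain ⟨l, h1, h2, h3⟩ := mlen_spec (atomicK zs gsG gsH) k
    rw [← h3, ← h2]
    exact lenBound' zs gsG gsH l h1
  · obtain ⟨l, h1, h2, h3⟩ := exDecompNu zs gsG gsH k
    rw [← h3]
    exact le_mlen (atomicK zs gsG gsH) h1 h2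

theorem len_coe_g (g : G) : mlen ((g : K)) = mlen g := by
  rw [mlenK_mu zs gsG gsH, muK, pGH_coe_g]
  have := mlen_one (M := H) gsH.atomic
  simp [this]

theorem len_coe_h (h : H) : mlen ((h : K)) = mlen h := by
  rw [mlenK_mu zs gsG gsH, muK, pGH_coe_h]
  have := mlen_one (M := G) gsG.atomic
  simp [this]

theorem add_rtr (h : H) (g : G) :
    mlen (zs.rtr h g) + mlen (zs.rtl h g) = mlen h + mlen g := by
  have h1 : muK zs ((h : K) * (g : K)) = mlen (zs.rtr h g) + mlen (zs.rtl h g) := by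
    rw [muK, rtr_def, rtl_def]
  have h2 : nuK zs ((h : K) * (g : K)) = mlen h + mlen g := by
    rw [nuK, pHG_unique zs rfl]
  rw [← h1, ← h2, ← mlenK_mu zs gsG gsH, ← mlenK_nu zs gsG gsH]

theorem add_ltr (g : G) (h : H) :
    mlen (zs.ltr g h) + mlen (zs.ltl g h) = mlen g + mlen h := by
  have h1 : nuK zs ((g : K) * (h : K)) = mlen (zs.ltr g h) + mlen (zs.ltl g h) := by
    rw [nuK, ltr_def, ltl_def]
  have h2 : muK zs ((g : K) * (h : K)) = mlen g + mlen h := by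
    rw [muK, pGH_unique zs rfl]
  rw [← h1, ← h2, ← mlenK_mu zs gsG gsH, ← mlenK_nu zs gsG gsH]

theorem rtr_ge : ∀ (h : H) (g : G), mlen g ≤ mlen (zs.rtr h g) := by
  suffices Key : ∀ n, ∀ (h : H) (g : G), mlen g ≤ n → mlen g ≤ mlen (zs.rtr h g) by
    intro h g; exact Key (mlen g) h g le_rfl
  intro n
  induction n with
  | zero => intro h g hg; omega
  | succ n ih =>
    intro h g hg
    by_cases hg1 : g = 1
    · subst hg1; rw [(rtr_one_g zs h).1]
    · obtain ⟨b, g₂, hb, rfl, hlen⟩ := peel_left gsG.atomic hg1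
      rw [(rtr_mul_g zs h b g₂).1]
      have h1 := mlen_superadd gsG.atomic (zs.rtr h b) (zs.rtr (zs.rtl h b) g₂)
      have h2 : 1 ≤ mlen (zs.rtr h b) :=
        mlen_pos gsG.atomic (fun he => hb.1 (rtr_eq_one zs he))
      have h3 := ih (zs.rtl h b) g₂ (by omega)
      omega

theorem ltr_ge : ∀ (g : G) (h : H), mlen h ≤ mlen (zs.ltr g h) := by
  suffices Key : ∀ n, ∀ (g : G) (h : H), mlen h ≤ n → mlen h ≤ mlen (zs.ltr g h) by
    intro g h; exact Key (mlen h) g h le_rfl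
  intro n
  induction n with
  | zero => intro g h hh; omega
  | succ n ih =>
    intro g h hh
    by_cases hh1 : h = 1
    · subst hh1; rw [(ltr_one_h zs g).1]
    · obtain ⟨b, h₂, hb, rfl, hlen⟩ := peel_left gsH.atomic hh1
      rw [(ltr_mul_h zs g b h₂).1]
      have h1 := mlen_superadd gsH.atomic (zs.ltr g b) (zs.ltr (zs.ltl g b) h₂)
      have h2 : 1 ≤ mlen (zs.ltr g b) :=
        mlen_pos gsH.atomic (fun he => hb.1 (ltr_eq_one zs he))
      have h3 := ih (zs.ltl g b) h₂ (by omega)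
      omega

theorem ltl_ge : ∀ (g : G) (h : H), mlen g ≤ mlen (zs.ltl g h) := by
  suffices Key : ∀ n, ∀ (g : G) (h : H), mlen g ≤ n → mlen g ≤ mlen (zs.ltl g h) by
    intro g h; exact Key (mlen g) g h le_rfl
  intro n
  induction n with
  | zero => intro g h hg; omega
  | succ n ih =>
    intro g h hg
    by_cases hg1 : g = 1
    · subst hg1; rw [(ltr_one_g zs h).2]
    · obtain ⟨b, g₂, hb, rfl, hlen⟩ := peel_left gsG.atomic hg1
      rw [(ltr_mul_g zs b g₂ h).2]
      have h1 := mlen_superadd gsG.atomic (zs.ltl b (zs.ltr g₂ h)) (zs.ltl g₂ h)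
      have h2 : 1 ≤ mlen (zs.ltl b (zs.ltr g₂ h)) :=
        mlen_pos gsG.atomic (fun he => hb.1 (ltl_eq_one zs he))
      have h3 := ih g₂ h (by omega)
      omega

theorem rtl_ge : ∀ (h : H) (g : G), mlen h ≤ mlen (zs.rtl h g) := by
  suffices Key : ∀ n, ∀ (h : H) (g : G), mlen h ≤ n → mlen h ≤ mlen (zs.rtl h g) by
    intro h g; exact Key (mlen h) h g le_rfl
  intro n
  induction n with
  | zero => intro h g hh; omega
  | succ n ih =>
    intro h g hh
    by_cases hh1 : h = 1
    · subst hh1; rw [(rtr_one_h zs g).2]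
    · obtain ⟨a, h₂, ha, rfl, hlen⟩ := peel_left gsH.atomic hh1
      rw [(rtr_mul_h zs a h₂ g).2]
      have h1 := mlen_superadd gsH.atomic (zs.rtl a (zs.rtr h₂ g)) (zs.rtl h₂ g)
      have h2 : 1 ≤ mlen (zs.rtl a (zs.rtr h₂ g)) :=
        mlen_pos gsH.atomic (fun he => ha.1 (rtl_eq_one zs he))
      have h3 := ih h₂ g (by omega)
      omega

theorem len_rtr (h : H) (g : G) : mlen (zs.rtr h g) = mlen g := by
  apply le_antisymm
  · have h1 := ltl_ge zs gsG gsH (zs.rtr h g) (zs.rtl h g)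
    rw [(ltr_rtr zs h g).2] at h1
    exact h1
  · exact rtr_ge zs gsG gsH h g

theorem len_rtl (h : H) (g : G) : mlen (zs.rtl h g) = mlen h := by
  have := add_rtr zs gsG gsH h g
  have := len_rtr zs gsG gsH h g
  omega

theorem len_ltr (g : G) (h : H) : mlen (zs.ltr g h) = mlen h := by
  apply le_antisymm
  · have h1 := rtl_ge zs gsG gsH (zs.ltr g h) (zs.ltl g h)
    rw [(rtr_ltr zs g h).2] at h1
    exact h1
  · exact ltr_ge zs gsG gsH g h

theorem len_ltl (g : G) (h : H) : mlen (zs.ltl g h) = mlen g := by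
  have := add_ltr zs gsG gsH g h
  have := len_ltr zs gsG gsH g h
  omega

theorem atom_rtr {b : G} (hb : MAtom b) (h : H) : MAtom (zs.rtr h b) :=
  atom_of_mlen_one gsG.atomic (by rw [len_rtr zs gsG gsH, mlen_atom gsG.atomic hb])

theorem atom_ltr {b : H} (hb : MAtom b) (g : G) : MAtom (zs.ltr g b) :=
  atom_of_mlen_one gsH.atomic (by rw [len_ltr zs gsG gsH, mlen_atom gsH.atomic hb])

theorem atom_ltl {b : G} (hb : MAtom b) (h : H) : MAtom (zs.ltl b h) :=
  atom_of_mlen_one gsG.atomic (by rw [len_ltl zs gsG gsH, mlen_atom gsG.atomic hb])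

theorem atom_rtl {b : H} (hb : MAtom b) (g : G) : MAtom (zs.rtl b g) :=
  atom_of_mlen_one gsH.atomic (by rw [len_rtl zs gsG gsH, mlen_atom gsH.atomic hb])

end ZSLayer3
section ZSLayer4

variable {K : Type*} [Monoid K] {G H : Submonoid K} (zs : ZS K G H)
  {ΔG : G} {ΔH : H} (gsG : GarsideStructure G ΔG) (gsH : GarsideStructure H ΔH)
include zs gsG gsH

theorem inj_rtr (h : H) : Function.Injective (zs.rtr h) := by
  intro g₁ g₂ he
  have e₁ := ltr_rtr zs h g₁
  have e₂ := ltr_rtr zs h g₂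
  rw [he] at e₁
  set w := zs.rtr h g₂ with hw
  set h₁' := zs.rtl h g₁ with hh₁
  set h₂' := zs.rtl h g₂ with hh₂
  obtain ⟨c₁, hc₁⟩ := (packOf gsH).dvd_join_left h₁' h₂'
  obtain ⟨c₂, hc₂⟩ := (packOf gsH).dvd_join_right h₁' h₂'
  have f₁ : zs.ltr w ((packOf gsH).join h₁' h₂') = h * zs.ltr g₁ c₁ := by
    rw [hc₁, (ltr_mul_h zs w h₁' c₁).1, e₁.1, e₁.2]
  have f₂ : zs.ltr w ((packOf gsH).join h₁' h₂') = h * zs.ltr g₂ c₂ := by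
    rw [hc₂, (ltr_mul_h zs w h₂' c₂).1, e₂.1, e₂.2]
  have hcc : zs.ltr g₁ c₁ = zs.ltr g₂ c₂ :=
    gsH.mul_left_cancel h _ _ (f₁.symm.trans f₂)
  have f₃ : zs.ltl w ((packOf gsH).join h₁' h₂') = zs.ltl g₁ c₁ := by
    rw [hc₁, (ltr_mul_h zs w h₁' c₁).2, e₁.2]
  have f₄ : zs.ltl w ((packOf gsH).join h₁' h₂') = zs.ltl g₂ c₂ := by
    rw [hc₂, (ltr_mul_h zs w h₂' c₂).2, e₂.2]
  have hll : zs.ltl g₁ c₁ = zs.ltl g₂ c₂ := f₃.symm.trans f₄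
  have hprod : (g₁ : K) * (c₁ : K) = (g₂ : K) * (c₂ : K) := by
    rw [← ltr_ltl_spec zs g₁ c₁, ← ltr_ltl_spec zs g₂ c₂, hcc, hll]
  have := (pGH_unique zs hprod).symm.trans (pGH_unique zs rfl)
  exact congrArg Prod.fst this

theorem inj_ltr (g : G) : Function.Injective (zs.ltr g) := by
  intro h₁ h₂ he
  have e₁ := rtr_ltr zs g h₁
  have e₂ := rtr_ltr zs g h₂
  rw [he] at e₁
  set w := zs.ltr g h₂ with hw
  set g₁' := zs.ltl g h₁ with hg₁
  set g₂' := zs.ltl g h₂ with hg₂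
  obtain ⟨c₁, hc₁⟩ := (packOf gsG).dvd_join_left g₁' g₂'
  obtain ⟨c₂, hc₂⟩ := (packOf gsG).dvd_join_right g₁' g₂'
  have f₁ : zs.rtr w ((packOf gsG).join g₁' g₂') = g * zs.rtr h₁ c₁ := by
    rw [hc₁, (rtr_mul_g zs w g₁' c₁).1, e₁.1, e₁.2]
  have f₂ : zs.rtr w ((packOf gsG).join g₁' g₂') = g * zs.rtr h₂ c₂ := by
    rw [hc₂, (rtr_mul_g zs w g₂' c₂).1, e₂.1, e₂.2]
  have hcc : zs.rtr h₁ c₁ = zs.rtr h₂ c₂ :=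
    gsG.mul_left_cancel g _ _ (f₁.symm.trans f₂)
  have f₃ : zs.rtl w ((packOf gsG).join g₁' g₂') = zs.rtl h₁ c₁ := by
    rw [hc₁, (rtr_mul_g zs w g₁' c₁).2, e₁.2]
  have f₄ : zs.rtl w ((packOf gsG).join g₁' g₂') = zs.rtl h₂ c₂ := by
    rw [hc₂, (rtr_mul_g zs w g₂' c₂).2, e₂.2]
  have hll : zs.rtl h₁ c₁ = zs.rtl h₂ c₂ := f₃.symm.trans f₄
  have hprod : (h₁ : K) * (c₁ : K) = (h₂ : K) * (c₂ : K) := by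
    rw [← rtr_rtl_spec zs h₁ c₁, ← rtr_rtl_spec zs h₂ c₂, hcc, hll]
  have := (pHG_unique zs hprod).symm.trans (pHG_unique zs rfl)
  exact congrArg Prod.fst this

theorem inj_ltl (h : H) : Function.Injective (fun g => zs.ltl g h) := by
  intro g₁ g₂ he
  simp only at he
  have e₁ := rtr_ltr zs g₁ h
  have e₂ := rtr_ltr zs g₂ h
  rw [he] at e₁
  set g'' := zs.ltl g₂ h with hg''
  obtain ⟨e₁', he₁⟩ := (packOf gsH).rdvd_rjoin_left (zs.ltr g₁ h) (zs.ltr g₂ h)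
  obtain ⟨e₂', he₂⟩ := (packOf gsH).rdvd_rjoin_right (zs.ltr g₁ h) (zs.ltr g₂ h)
  have f₁ : zs.rtr ((packOf gsH).rjoin (zs.ltr g₁ h) (zs.ltr g₂ h)) g'' =
      zs.rtr e₁' g₁ := by
    rw [he₁, (rtr_mul_h zs e₁' (zs.ltr g₁ h) g'').1, e₁.1]
  have f₂ : zs.rtr ((packOf gsH).rjoin (zs.ltr g₁ h) (zs.ltr g₂ h)) g'' =
      zs.rtr e₂' g₂ := by
    rw [he₂, (rtr_mul_h zs e₂' (zs.ltr g₂ h) g'').1, e₂.1]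
  have f₃ : zs.rtl ((packOf gsH).rjoin (zs.ltr g₁ h) (zs.ltr g₂ h)) g'' =
      zs.rtl e₁' g₁ * h := by
    rw [he₁, (rtr_mul_h zs e₁' (zs.ltr g₁ h) g'').2, e₁.1, e₁.2]
  have f₄ : zs.rtl ((packOf gsH).rjoin (zs.ltr g₁ h) (zs.ltr g₂ h)) g'' =
      zs.rtl e₂' g₂ * h := by
    rw [he₂, (rtr_mul_h zs e₂' (zs.ltr g₂ h) g'').2, e₂.1, e₂.2]
  have hll : zs.rtl e₁' g₁ = zs.rtl e₂' g₂ :=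
    gsH.mul_right_cancel h _ _ (f₃.symm.trans f₄)
  have hcc : zs.rtr e₁' g₁ = zs.rtr e₂' g₂ := f₁.symm.trans f₂
  have hprod : (e₁' : K) * (g₁ : K) = (e₂' : K) * (g₂ : K) := by
    rw [← rtr_rtl_spec zs e₁' g₁, ← rtr_rtl_spec zs e₂' g₂, hcc, hll]
  have := (pHG_unique zs hprod).symm.trans (pHG_unique zs rfl)
  exact congrArg Prod.snd this

theorem inj_rtl (g : G) : Function.Injective (fun h => zs.rtl h g) := by
  intro h₁ h₂ he
  simp only at he
  have e₁ := ltr_rtr zs h₁ g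
  have e₂ := ltr_rtr zs h₂ g
  rw [he] at e₁
  set hbar := zs.rtl h₂ g with hhbar
  obtain ⟨d₁, hd₁⟩ := (packOf gsG).rdvd_rjoin_left (zs.rtr h₁ g) (zs.rtr h₂ g)
  obtain ⟨d₂, hd₂⟩ := (packOf gsG).rdvd_rjoin_right (zs.rtr h₁ g) (zs.rtr h₂ g)
  have f₁ : zs.ltr ((packOf gsG).rjoin (zs.rtr h₁ g) (zs.rtr h₂ g)) hbar =
      zs.ltr d₁ h₁ := by
    rw [hd₁, (ltr_mul_g zs d₁ (zs.rtr h₁ g) hbar).1, e₁.1]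
  have f₂ : zs.ltr ((packOf gsG).rjoin (zs.rtr h₁ g) (zs.rtr h₂ g)) hbar =
      zs.ltr d₂ h₂ := by
    rw [hd₂, (ltr_mul_g zs d₂ (zs.rtr h₂ g) hbar).1, e₂.1]
  have f₃ : zs.ltl ((packOf gsG).rjoin (zs.rtr h₁ g) (zs.rtr h₂ g)) hbar =
      zs.ltl d₁ h₁ * g := by
    rw [hd₁, (ltr_mul_g zs d₁ (zs.rtr h₁ g) hbar).2, e₁.1, e₁.2]
  have f₄ : zs.ltl ((packOf gsG).rjoin (zs.rtr h₁ g) (zs.rtr h₂ g)) hbar =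
      zs.ltl d₂ h₂ * g := by
    rw [hd₂, (ltr_mul_g zs d₂ (zs.rtr h₂ g) hbar).2, e₂.1, e₂.2]
  have hll : zs.ltl d₁ h₁ = zs.ltl d₂ h₂ :=
    gsG.mul_right_cancel g _ _ (f₃.symm.trans f₄)
  have hcc : zs.ltr d₁ h₁ = zs.ltr d₂ h₂ := f₁.symm.trans f₂
  have hprod : (d₁ : K) * (h₁ : K) = (d₂ : K) * (h₂ : K) := by
    rw [← ltr_ltl_spec zs d₁ h₁, ← ltr_ltl_spec zs d₂ h₂, hcc, hll]
  have := (pGH_unique zs hprod).symm.trans (pGH_unique zs rfl)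
  exact congrArg Prod.snd this

theorem surj_rtr (h : H) : Function.Surjective (zs.rtr h) :=
  surj_of_inj_len gsG.atomic (atoms_finite gsG) (inj_rtr zs gsG gsH h)
    (len_rtr zs gsG gsH h)

theorem surj_ltr (g : G) : Function.Surjective (zs.ltr g) :=
  surj_of_inj_len gsH.atomic (atoms_finite gsH) (inj_ltr zs gsG gsH g)
    (len_ltr zs gsG gsH g)

theorem surj_ltl (h : H) : Function.Surjective (fun g => zs.ltl g h) :=
  surj_of_inj_len gsG.atomic (atoms_finite gsG) (inj_ltl zs gsG gsH h)
    (fun g => len_ltl zs gsG gsH g h)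

theorem surj_rtl (g : G) : Function.Surjective (fun h => zs.rtl h g) :=
  surj_of_inj_len gsH.atomic (atoms_finite gsH) (inj_rtl zs gsG gsH g)
    (fun h => len_rtl zs gsG gsH h g)

omit gsG gsH in
/-- Inverse maps. -/
noncomputable def irtr (h : H) : G → G := @Function.invFun _ _ ⟨1⟩ (zs.rtr h)
omit gsG gsH in
noncomputable def iltr (g : G) : H → H := @Function.invFun _ _ ⟨1⟩ (zs.ltr g)
omit gsG gsH in
noncomputable def iltl (h : H) : G → G := @Function.invFun _ _ ⟨1⟩ (fun g => zs.ltl g h)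
omit gsG gsH in
noncomputable def irtl (g : G) : H → H := @Function.invFun _ _ ⟨1⟩ (fun h => zs.rtl h g)

theorem rtr_irtr (h : H) (w : G) : zs.rtr h (irtr zs h w) = w :=
  @Function.invFun_eq _ _ ⟨1⟩ _ _ (surj_rtr zs gsG gsH h w)

theorem irtr_rtr (h : H) (g : G) : irtr zs h (zs.rtr h g) = g :=
  @Function.leftInverse_invFun _ _ ⟨1⟩ _ (inj_rtr zs gsG gsH h) g

theorem ltr_iltr (g : G) (w : H) : zs.ltr g (iltr zs g w) = w :=
  @Function.invFun_eq _ _ ⟨1⟩ _ _ (surj_ltr zs gsG gsH g w)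

theorem iltr_ltr (g : G) (h : H) : iltr zs g (zs.ltr g h) = h :=
  @Function.leftInverse_invFun _ _ ⟨1⟩ _ (inj_ltr zs gsG gsH g) h

theorem ltl_iltl (h : H) (w : G) : zs.ltl (iltl zs h w) h = w :=
  @Function.invFun_eq _ _ ⟨1⟩ _ _ (surj_ltl zs gsG gsH h w)

theorem iltl_ltl (h : H) (g : G) : iltl zs h (zs.ltl g h) = g :=
  @Function.leftInverse_invFun _ _ ⟨1⟩ _ (inj_ltl zs gsG gsH h) g

theorem rtl_irtl (g : G) (w : H) : zs.rtl (irtl zs g w) g = w :=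
  @Function.invFun_eq _ _ ⟨1⟩ _ _ (surj_rtl zs gsG gsH g w)

theorem irtl_rtl (g : G) (h : H) : irtl zs g (zs.rtl h g) = h :=
  @Function.leftInverse_invFun _ _ ⟨1⟩ _ (inj_rtl zs gsG gsH g) h

theorem rtr_dvd_iff (h : H) {g₁ g₂ : G} : zs.rtr h g₁ ∣ zs.rtr h g₂ ↔ g₁ ∣ g₂ := by
  constructor
  · rintro ⟨x, hx⟩
    refine ⟨irtr zs (zs.rtl h g₁) x, ?_⟩
    apply inj_rtr zs gsG gsH h
    rw [(rtr_mul_g zs h g₁ _).1, rtr_irtr zs gsG gsH, ← hx]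
  · rintro ⟨c, rfl⟩
    exact ⟨zs.rtr (zs.rtl h g₁) c, (rtr_mul_g zs h g₁ c).1⟩

theorem ltr_dvd_iff (g : G) {h₁ h₂ : H} : zs.ltr g h₁ ∣ zs.ltr g h₂ ↔ h₁ ∣ h₂ := by
  constructor
  · rintro ⟨x, hx⟩
    refine ⟨iltr zs (zs.ltl g h₁) x, ?_⟩
    apply inj_ltr zs gsG gsH g
    rw [(ltr_mul_h zs g h₁ _).1, ltr_iltr zs gsG gsH, ← hx]
  · rintro ⟨c, rfl⟩
    exact ⟨zs.ltr (zs.ltl g h₁) c, (ltr_mul_h zs g h₁ c).1⟩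

theorem ltl_rdvd_iff (h : H) {g₁ g₂ : G} :
    RDvd (zs.ltl g₁ h) (zs.ltl g₂ h) ↔ RDvd g₁ g₂ := by
  constructor
  · rintro ⟨x, hx⟩
    refine ⟨iltl zs (zs.ltr g₁ h) x, ?_⟩
    apply inj_ltl zs gsG gsH h
    show zs.ltl g₂ h = zs.ltl (iltl zs (zs.ltr g₁ h) x * g₁) h
    rw [(ltr_mul_g zs _ g₁ h).2, ltl_iltl zs gsG gsH]
    exact hx
  · rintro ⟨u, rfl⟩
    exact ⟨zs.ltl u (zs.ltr g₁ h), (ltr_mul_g zs u g₁ h).2⟩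

theorem rtl_rdvd_iff (g : G) {h₁ h₂ : H} :
    RDvd (zs.rtl h₁ g) (zs.rtl h₂ g) ↔ RDvd h₁ h₂ := by
  constructor
  · rintro ⟨x, hx⟩
    refine ⟨irtl zs (zs.rtr h₁ g) x, ?_⟩
    apply inj_rtl zs gsG gsH g
    show zs.rtl h₂ g = zs.rtl (irtl zs (zs.rtr h₁ g) x * h₁) g
    rw [(rtr_mul_h zs _ h₁ g).2, rtl_irtl zs gsG gsH]
    exact hx
  · rintro ⟨u, rfl⟩
    exact ⟨zs.rtl u (zs.rtr h₁ g), (rtr_mul_h zs u h₁ g).2⟩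

theorem rtr_join (h : H) (g₁ g₂ : G) :
    zs.rtr h ((packOf gsG).join g₁ g₂) =
      (packOf gsG).join (zs.rtr h g₁) (zs.rtr h g₂) := by
  symm
  apply (packOf gsG).join_unique
  refine ⟨?_, ?_, ?_⟩
  · exact (rtr_dvd_iff zs gsG gsH h).mpr ((packOf gsG).dvd_join_left g₁ g₂)
  · exact (rtr_dvd_iff zs gsG gsH h).mpr ((packOf gsG).dvd_join_right g₁ g₂)
  · intro n h1 h2
    have hn : zs.rtr h (irtr zs h n) = n := rtr_irtr zs gsG gsH h n
    rw [← hn] at h1 h2 ⊢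
    rw [rtr_dvd_iff zs gsG gsH h] at h1 h2 ⊢
    exact (packOf gsG).join_dvd h1 h2

theorem ltr_join (g : G) (h₁ h₂ : H) :
    zs.ltr g ((packOf gsH).join h₁ h₂) =
      (packOf gsH).join (zs.ltr g h₁) (zs.ltr g h₂) := by
  symm
  apply (packOf gsH).join_unique
  refine ⟨?_, ?_, ?_⟩
  · exact (ltr_dvd_iff zs gsG gsH g).mpr ((packOf gsH).dvd_join_left h₁ h₂)
  · exact (ltr_dvd_iff zs gsG gsH g).mpr ((packOf gsH).dvd_join_right h₁ h₂)
  · intro n h1 h2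
    have hn : zs.ltr g (iltr zs g n) = n := ltr_iltr zs gsG gsH g n
    rw [← hn] at h1 h2 ⊢
    rw [ltr_dvd_iff zs gsG gsH g] at h1 h2 ⊢
    exact (packOf gsH).join_dvd h1 h2

theorem ltl_rjoin (h : H) (g₁ g₂ : G) :
    zs.ltl ((packOf gsG).rjoin g₁ g₂) h =
      (packOf gsG).rjoin (zs.ltl g₁ h) (zs.ltl g₂ h) := by
  symm
  apply (packOf gsG).rjoin_unique
  refine ⟨?_, ?_, ?_⟩
  · exact (ltl_rdvd_iff zs gsG gsH h).mpr ((packOf gsG).rdvd_rjoin_left g₁ g₂)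
  · exact (ltl_rdvd_iff zs gsG gsH h).mpr ((packOf gsG).rdvd_rjoin_right g₁ g₂)
  · intro n h1 h2
    have hn : zs.ltl (iltl zs h n) h = n := ltl_iltl zs gsG gsH h n
    rw [← hn] at h1 h2 ⊢
    rw [ltl_rdvd_iff zs gsG gsH h] at h1 h2 ⊢
    exact (packOf gsG).rjoin_rdvd h1 h2

theorem rtl_rjoin (g : G) (h₁ h₂ : H) :
    zs.rtl ((packOf gsH).rjoin h₁ h₂) g =
      (packOf gsH).rjoin (zs.rtl h₁ g) (zs.rtl h₂ g) := by
  symm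
  apply (packOf gsH).rjoin_unique
  refine ⟨?_, ?_, ?_⟩
  · exact (rtl_rdvd_iff zs gsG gsH g).mpr ((packOf gsH).rdvd_rjoin_left h₁ h₂)
  · exact (rtl_rdvd_iff zs gsG gsH g).mpr ((packOf gsH).rdvd_rjoin_right h₁ h₂)
  · intro n h1 h2
    have hn : zs.rtl (irtl zs g n) g = n := rtl_irtl zs gsG gsH g n
    rw [← hn] at h1 h2 ⊢
    rw [rtl_rdvd_iff zs gsG gsH g] at h1 h2 ⊢
    exact (packOf gsH).rjoin_rdvd h1 h2

end ZSLayer4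
section ZSLayer5

variable {K : Type*} [Monoid K] {G H : Submonoid K} (zs : ZS K G H)
  {ΔG : G} {ΔH : H} (gsG : GarsideStructure G ΔG) (gsH : GarsideStructure H ΔH)
include zs gsG gsH

theorem iltr_rtr_rtl (h : H) (gu : G) :
    iltr zs (zs.rtr h gu) h = zs.rtl h gu := by
  apply inj_ltr zs gsG gsH (zs.rtr h gu)
  rw [ltr_iltr zs gsG gsH, (ltr_rtr zs h gu).1]

theorem iltr_comp (c c' : G) (h : H) :
    iltr zs (c * c') h = iltr zs c' (iltr zs c h) := by
  apply inj_ltr zs gsG gsH (c * c')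
  rw [ltr_iltr zs gsG gsH, (ltr_mul_g zs c c' _).1, ltr_iltr zs gsG gsH,
    ltr_iltr zs gsG gsH]

theorem iltr_dvd_iff (c : G) {h₁ h₂ : H} : iltr zs c h₁ ∣ iltr zs c h₂ ↔ h₁ ∣ h₂ := by
  rw [← ltr_dvd_iff zs gsG gsH c (h₁ := iltr zs c h₁) (h₂ := iltr zs c h₂),
    ltr_iltr zs gsG gsH, ltr_iltr zs gsG gsH]

theorem iltr_join (c : G) (h₁ h₂ : H) :
    iltr zs c ((packOf gsH).join h₁ h₂) =
      (packOf gsH).join (iltr zs c h₁) (iltr zs c h₂) := by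
  apply inj_ltr zs gsG gsH c
  rw [ltr_iltr zs gsG gsH, ltr_join zs gsG gsH, ltr_iltr zs gsG gsH,
    ltr_iltr zs gsG gsH]

theorem irtl_ltl_ltr (gu : G) (h : H) :
    irtl zs (zs.ltl gu h) h = zs.ltr gu h := by
  apply inj_rtl zs gsG gsH (zs.ltl gu h)
  show zs.rtl (irtl zs (zs.ltl gu h) h) (zs.ltl gu h) = zs.rtl (zs.ltr gu h) (zs.ltl gu h)
  rw [rtl_irtl zs gsG gsH, (rtr_ltr zs gu h).2]

theorem irtl_comp (e c : G) (h : H) :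
    irtl zs (e * c) h = irtl zs e (irtl zs c h) := by
  apply inj_rtl zs gsG gsH (e * c)
  show zs.rtl (irtl zs (e * c) h) (e * c) = zs.rtl (irtl zs e (irtl zs c h)) (e * c)
  rw [rtl_irtl zs gsG gsH, (rtr_mul_g zs _ e c).2, rtl_irtl zs gsG gsH,
    rtl_irtl zs gsG gsH]

theorem irtl_rdvd_iff (c : G) {h₁ h₂ : H} :
    RDvd (irtl zs c h₁) (irtl zs c h₂) ↔ RDvd h₁ h₂ := by
  rw [← rtl_rdvd_iff zs gsG gsH c (h₁ := irtl zs c h₁) (h₂ := irtl zs c h₂),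
    rtl_irtl zs gsG gsH, rtl_irtl zs gsG gsH]

theorem irtl_rjoin (c : G) (h₁ h₂ : H) :
    irtl zs c ((packOf gsH).rjoin h₁ h₂) =
      (packOf gsH).rjoin (irtl zs c h₁) (irtl zs c h₂) := by
  apply inj_rtl zs gsG gsH c
  show zs.rtl (irtl zs c ((packOf gsH).rjoin h₁ h₂)) c =
    zs.rtl ((packOf gsH).rjoin (irtl zs c h₁) (irtl zs c h₂)) c
  rw [rtl_irtl zs gsG gsH, rtl_rjoin zs gsG gsH, rtl_irtl zs gsG gsH,
    rtl_irtl zs gsG gsH]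

omit gsG gsH in
theorem quadGH (gx : G) (hx : H) (gu : G) (hu : H) :
    ((gx : K) * (hx : K)) * ((gu : K) * (hu : K)) =
      ((gx * zs.rtr hx gu : G) : K) * ((zs.rtl hx gu * hu : H) : K) := by
  simp only [Submonoid.coe_mul]
  rw [mul_assoc ((gx : K)), ← mul_assoc ((hx : K))]
  rw [mul_assoc ((gx : K)), ← mul_assoc ((zs.rtr hx gu : K)), rtr_rtl_spec]

omit gsG gsH in
theorem quadHG (hx : H) (gx : G) (hu : H) (gu : G) :
    ((hu : K) * (gu : K)) * ((hx : K) * (gx : K)) =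
      ((hu * zs.ltr gu hx : H) : K) * ((zs.ltl gu hx * gx : G) : K) := by
  simp only [Submonoid.coe_mul]
  rw [mul_assoc ((hu : K)), ← mul_assoc ((gu : K))]
  rw [mul_assoc ((hu : K)), ← mul_assoc ((zs.ltr gu hx : K)), ltr_ltl_spec]

/-- Left-divisibility characterisation in `K`. -/
theorem dvdK_iff {x z : K} : x ∣ z ↔
    ∃ c : G, (pGH zs x).1 * c = (pGH zs z).1 ∧
      iltr zs c (pGH zs x).2 ∣ (pGH zs z).2 := by
  constructor
  · rintro ⟨u, rfl⟩
    have hq := quadGH zs (pGH zs x).1 (pGH zs x).2 (pGH zs u).1 (pGH zs u).2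
    rw [pGH_spec, pGH_spec] at hq
    have h2 := pGH_unique zs hq.symm
    have h3 : (pGH zs (x * u)).1 =
        (pGH zs x).1 * zs.rtr (pGH zs x).2 (pGH zs u).1 := by rw [h2]
    have h4 : (pGH zs (x * u)).2 =
        zs.rtl (pGH zs x).2 (pGH zs u).1 * (pGH zs u).2 := by rw [h2]
    refine ⟨zs.rtr (pGH zs x).2 (pGH zs u).1, h3.symm, ?_⟩
    rw [iltr_rtr_rtl zs gsG gsH]
    exact ⟨(pGH zs u).2, h4⟩
  · rintro ⟨c, hc, hu, hdvd⟩
    set gu : G := irtr zs (pGH zs x).2 c with hgu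
    have hc' : zs.rtr (pGH zs x).2 gu = c := rtr_irtr zs gsG gsH _ c
    have hrtl : zs.rtl (pGH zs x).2 gu = iltr zs c (pGH zs x).2 := by
      rw [← hc', iltr_rtr_rtl zs gsG gsH]
    refine ⟨(gu : K) * (hu : K), ?_⟩
    have hq := quadGH zs (pGH zs x).1 (pGH zs x).2 gu hu
    rw [pGH_spec] at hq
    rw [hq, hc', hrtl, hc, ← hdvd]
    exact (pGH_spec zs z).symm

/-- Right-divisibility characterisation in `K`. -/
theorem rdvdK_iff {x z : K} : RDvd x z ↔
    ∃ c : G, c * (pHG zs x).2 = (pHG zs z).2 ∧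
      RDvd (irtl zs c (pHG zs x).1) (pHG zs z).1 := by
  constructor
  · rintro ⟨u, rfl⟩
    have hq := quadHG zs (pHG zs x).1 (pHG zs x).2 (pHG zs u).1 (pHG zs u).2
    rw [pHG_spec, pHG_spec] at hq
    have h2 := pHG_unique zs hq.symm
    have h3 : (pHG zs (u * x)).1 =
        (pHG zs u).1 * zs.ltr (pHG zs u).2 (pHG zs x).1 := by rw [h2]
    have h4 : (pHG zs (u * x)).2 =
        zs.ltl (pHG zs u).2 (pHG zs x).1 * (pHG zs x).2 := by rw [h2]
    refine ⟨zs.ltl (pHG zs u).2 (pHG zs x).1, h4.symm, ?_⟩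
    rw [irtl_ltl_ltr zs gsG gsH]
    exact ⟨(pHG zs u).1, h3⟩
  · rintro ⟨c, hc, hu, hrd⟩
    set gu : G := iltl zs (pHG zs x).1 c with hgu
    have hc' : zs.ltl gu (pHG zs x).1 = c := ltl_iltl zs gsG gsH _ c
    have hltr : zs.ltr gu (pHG zs x).1 = irtl zs c (pHG zs x).1 := by
      rw [← hc', irtl_ltl_ltr zs gsG gsH]
    refine ⟨(hu : K) * (gu : K), ?_⟩
    have hq := quadHG zs (pHG zs x).1 (pHG zs x).2 hu gu
    rw [pHG_spec] at hq
    rw [hq, hc', hltr, hc, ← hrd]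
    exact (pHG_spec zs z).symm

/-- Joins in `K` (left). -/
theorem K_join_left : ∀ x y : K, ∃ m, IsDvdLCM x y m := by
  intro x y
  set gx := (pGH zs x).1; set hx := (pGH zs x).2
  set gy := (pGH zs y).1; set hy := (pGH zs y).2
  set g0 := (packOf gsG).join gx gy with hg0
  set cx := (packOf gsG).comp gx g0 with hcx
  set cy := (packOf gsG).comp gy g0 with hcy
  have hgx0 : gx * cx = g0 := by
    rw [hcx, (packOf gsG).comp_spec, (packOf gsG).join_self_of_dvd ((packOf gsG).dvd_join_left gx gy)]
  have hgy0 : gy * cy = g0 := by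
    rw [hcy, (packOf gsG).comp_spec, (packOf gsG).join_self_of_dvd ((packOf gsG).dvd_join_right gx gy)]
  set h0 := (packOf gsH).join (iltr zs cx hx) (iltr zs cy hy) with hh0
  refine ⟨(g0 : K) * (h0 : K), ?_, ?_, ?_⟩
  · rw [dvdK_iff zs gsG gsH]
    refine ⟨cx, ?_, ?_⟩
    · rw [pGH_unique zs rfl]; exact hgx0
    · rw [pGH_unique zs rfl]
      exact (packOf gsH).dvd_join_left _ _
  · rw [dvdK_iff zs gsG gsH]
    refine ⟨cy, ?_, ?_⟩
    · rw [pGH_unique zs rfl]; exact hgy0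
    · rw [pGH_unique zs rfl]
      exact (packOf gsH).dvd_join_right _ _
  · intro z hxz hyz
    rw [dvdK_iff zs gsG gsH] at hxz hyz ⊢
    obtain ⟨c, hc1, hc2⟩ := hxz
    obtain ⟨c', hc1', hc2'⟩ := hyz
    have hg0z : g0 ∣ (pGH zs z).1 := (packOf gsG).join_dvd ⟨c, hc1.symm⟩ ⟨c', hc1'.symm⟩
    set d := (packOf gsG).comp g0 (pGH zs z).1 with hd
    have hg0d : g0 * d = (pGH zs z).1 := by
      rw [hd, (packOf gsG).comp_spec, (packOf gsG).join_self_of_dvd hg0z]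
    have hceq : c = cx * d := by
      apply gsG.mul_left_cancel gx
      rw [hc1, ← mul_assoc, hgx0, hg0d]
    have hceq' : c' = cy * d := by
      apply gsG.mul_left_cancel gy
      rw [hc1', ← mul_assoc, hgy0, hg0d]
    refine ⟨d, ?_, ?_⟩
    · rw [pGH_unique zs rfl]; exact hg0d
    · rw [pGH_unique zs rfl]
      rw [hh0, iltr_join zs gsG gsH]
      apply (packOf gsH).join_dvd
      · rw [← iltr_comp zs gsG gsH, ← hceq]; exact hc2
      · rw [← iltr_comp zs gsG gsH, ← hceq']; exact hc2'

/-- Joins in `K` (right). -/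
theorem K_join_right : ∀ x y : K,
    ∃ m, RDvd x m ∧ RDvd y m ∧ ∀ n, RDvd x n → RDvd y n → RDvd m n := by
  intro x y
  set gx := (pHG zs x).2; set hx := (pHG zs x).1
  set gy := (pHG zs y).2; set hy := (pHG zs y).1
  set g0 := (packOf gsG).rjoin gx gy with hg0
  set cx := (packOf gsG).rcomp gx g0 with hcx
  set cy := (packOf gsG).rcomp gy g0 with hcy
  have hgx0 : cx * gx = g0 := by
    rw [hcx, (packOf gsG).rcomp_spec,
      (packOf gsG).rjoin_self_right ((packOf gsG).rdvd_rjoin_left gx gy)]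
  have hgy0 : cy * gy = g0 := by
    rw [hcy, (packOf gsG).rcomp_spec,
      (packOf gsG).rjoin_self_right ((packOf gsG).rdvd_rjoin_right gx gy)]
  set h0 := (packOf gsH).rjoin (irtl zs cx hx) (irtl zs cy hy) with hh0
  refine ⟨(h0 : K) * (g0 : K), ?_, ?_, ?_⟩
  · rw [rdvdK_iff zs gsG gsH]
    refine ⟨cx, ?_, ?_⟩
    · rw [pHG_unique zs rfl]; exact hgx0
    · rw [pHG_unique zs rfl]
      exact (packOf gsH).rdvd_rjoin_left _ _
  · rw [rdvdK_iff zs gsG gsH]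
    refine ⟨cy, ?_, ?_⟩
    · rw [pHG_unique zs rfl]; exact hgy0
    · rw [pHG_unique zs rfl]
      exact (packOf gsH).rdvd_rjoin_right _ _
  · intro z hxz hyz
    rw [rdvdK_iff zs gsG gsH] at hxz hyz ⊢
    obtain ⟨c, hc1, hc2⟩ := hxz
    obtain ⟨c', hc1', hc2'⟩ := hyz
    have hg0z : RDvd g0 (pHG zs z).2 := (packOf gsG).rjoin_rdvd ⟨c, hc1.symm⟩ ⟨c', hc1'.symm⟩
    set d := (packOf gsG).rcomp g0 (pHG zs z).2 with hd
    have hg0d : d * g0 = (pHG zs z).2 := by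
      rw [hd, (packOf gsG).rcomp_spec, (packOf gsG).rjoin_self_right hg0z]
    have hceq : c = d * cx := by
      apply gsG.mul_right_cancel gx
      rw [hc1, mul_assoc, hgx0, hg0d]
    have hceq' : c' = d * cy := by
      apply gsG.mul_right_cancel gy
      rw [hc1', mul_assoc, hgy0, hg0d]
    refine ⟨d, ?_, ?_⟩
    · rw [pHG_unique zs rfl]; exact hg0d
    · rw [pHG_unique zs rfl]
      rw [hh0, irtl_rjoin zs gsG gsH]
      apply (packOf gsH).rjoin_rdvd
      · rw [← irtl_comp zs gsG gsH, ← hceq]; exact hc2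
      · rw [← irtl_comp zs gsG gsH, ← hceq']; exact hc2'

/-- Atoms of `K` form a finite set. -/
theorem atomsK_finite : {x : K | MAtom x}.Finite := by
  apply Set.Finite.subset (((atoms_finite gsG).image (fun a : G => (a : K))).union
    ((atoms_finite gsH).image (fun b : H => (b : K))))
  intro x hx
  rcases atomK_cases zs gsG gsH hx with ⟨a, ha, rfl⟩ | ⟨b, hb, rfl⟩
  · exact Or.inl ⟨a, ha, rfl⟩
  · exact Or.inr ⟨b, hb, rfl⟩

/-- The lattice pack of `K`. -/
theorem packK : LatPack K :=
  ⟨atomicK zs gsG gsH, K_lc zs gsG gsH, K_rc zs gsG gsH,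
    K_join_left zs gsG gsH, K_join_right zs gsG gsH⟩

theorem K_meet_left : ∀ x y : K, ∃ d, d ∣ x ∧ d ∣ y ∧ ∀ e, e ∣ x → e ∣ y → e ∣ d :=
  (packK zs gsG gsH).meets
    (fun z => divisors_finite (atomicK zs gsG gsH) (atomsK_finite zs gsG gsH) z)

theorem K_meet_right : ∀ x y : K,
    ∃ d, RDvd d x ∧ RDvd d y ∧ ∀ e, RDvd e x → RDvd e y → RDvd e d :=
  (packK zs gsG gsH).rmeets
    (fun z => rdivisors_finite (atomicK zs gsG gsH) (atomsK_finite zs gsG gsH) z)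

end ZSLayer5
section ZSLayer6

variable {K : Type*} [Monoid K] {G H : Submonoid K} (zs : ZS K G H)
  {ΔG : G} {ΔH : H} (gsG : GarsideStructure G ΔG) (gsH : GarsideStructure H ΔH)
include zs gsG gsH

theorem iltr_one (c : G) : iltr zs c (1 : H) = 1 := by
  apply inj_ltr zs gsG gsH c
  rw [ltr_iltr zs gsG gsH, (ltr_one_h zs c).1]

omit gsG gsH in
theorem coe_dvd_g {g₁ g₂ : G} (h : g₁ ∣ g₂) : (g₁ : K) ∣ (g₂ : K) := by
  obtain ⟨c, rfl⟩ := h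
  exact ⟨(c : K), by rw [Submonoid.coe_mul]⟩

omit gsG gsH in
theorem coe_dvd_h {h₁ h₂ : H} (h : h₁ ∣ h₂) : (h₁ : K) ∣ (h₂ : K) := by
  obtain ⟨c, rfl⟩ := h
  exact ⟨(c : K), by rw [Submonoid.coe_mul]⟩

omit gsG gsH in
theorem coe_rdvd_g {g₁ g₂ : G} (h : RDvd g₁ g₂) : RDvd (g₁ : K) (g₂ : K) := by
  obtain ⟨c, rfl⟩ := h
  exact ⟨(c : K), by rw [Submonoid.coe_mul]⟩

theorem coe_g_dvd_iff {g : G} {z : K} : (g : K) ∣ z ↔ g ∣ (pGH zs z).1 := by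
  rw [dvdK_iff zs gsG gsH]
  constructor
  · rintro ⟨c, hc1, _⟩
    rw [pGH_coe_g] at hc1
    exact ⟨c, hc1.symm⟩
  · rintro ⟨c, hc⟩
    refine ⟨c, ?_, ?_⟩
    · rw [pGH_coe_g]; exact hc.symm
    · rw [pGH_coe_g]
      show iltr zs c (1 : H) ∣ (pGH zs z).2
      rw [iltr_one zs gsG gsH]
      exact one_dvd _
  
omit gsG gsH in
theorem coe_h_dvd_iff {h : H} {z : K} : (h : K) ∣ z ↔ h ∣ (pHG zs z).1 := by
  constructor
  · rintro ⟨u, rfl⟩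
    rw [pHG_mul_h]
    exact ⟨(pHG zs u).1, rfl⟩
  · rintro ⟨w, hw⟩
    refine ⟨(w : K) * ((pHG zs z).2 : K), ?_⟩
    rw [← mul_assoc, ← Submonoid.coe_mul, ← hw]
    exact (pHG_spec zs z).symm

omit gsG gsH in
theorem pHG_gh (g : G) (h : H) : pHG zs ((g : K) * (h : K)) = (zs.ltr g h, zs.ltl g h) :=
  pHG_unique zs (ltr_ltl_spec zs g h)

omit gsG gsH in
theorem pGH_gh (g : G) (h : H) : pGH zs ((g : K) * (h : K)) = (g, h) :=
  pGH_unique zs rfl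

/-- Joins of `G`-elements agree. -/
theorem coeG_join (g₁ g₂ : G) :
    IsDvdLCM ((g₁ : K)) ((g₂ : K)) (((packOf gsG).join g₁ g₂ : G) : K) := by
  refine ⟨coe_dvd_g zs ((packOf gsG).dvd_join_left g₁ g₂),
    coe_dvd_g zs ((packOf gsG).dvd_join_right g₁ g₂), ?_⟩
  intro n h1 h2
  rw [coe_g_dvd_iff zs gsG gsH] at h1 h2 ⊢
  exact (packOf gsG).join_dvd h1 h2

theorem coeH_join (h₁ h₂ : H) :
    IsDvdLCM ((h₁ : K)) ((h₂ : K)) (((packOf gsH).join h₁ h₂ : H) : K) := by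
  refine ⟨coe_dvd_h zs ((packOf gsH).dvd_join_left h₁ h₂),
    coe_dvd_h zs ((packOf gsH).dvd_join_right h₁ h₂), ?_⟩
  intro n h1 h2
  rw [coe_h_dvd_iff zs] at h1 h2 ⊢
  exact (packOf gsH).join_dvd h1 h2

theorem compK_coeG (g₁ g₂ : G) :
    (packK zs gsG gsH).comp ((g₁ : K)) ((g₂ : K)) = (((packOf gsG).comp g₁ g₂ : G) : K) := by
  apply K_lc zs gsG gsH ((g₁ : K))
  rw [(packK zs gsG gsH).comp_spec,
    (packK zs gsG gsH).join_unique (coeG_join zs gsG gsH g₁ g₂), ← Submonoid.coe_mul,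
    (packOf gsG).comp_spec]

theorem compK_coeH (h₁ h₂ : H) :
    (packK zs gsG gsH).comp ((h₁ : K)) ((h₂ : K)) = (((packOf gsH).comp h₁ h₂ : H) : K) := by
  apply K_lc zs gsG gsH ((h₁ : K))
  rw [(packK zs gsG gsH).comp_spec,
    (packK zs gsG gsH).join_unique (coeH_join zs gsG gsH h₁ h₂), ← Submonoid.coe_mul,
    (packOf gsH).comp_spec]

/-- `lcm(a, h) = a * (a ▶)⁻¹ h` for `a ∈ G`, `h ∈ H`. -/
theorem lcm_g_h (a : G) (h : H) :
    IsDvdLCM ((a : K)) ((h : K)) ((a : K) * ((iltr zs a h : H) : K)) := by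
  refine ⟨⟨_, rfl⟩, ?_, ?_⟩
  · rw [coe_h_dvd_iff zs, pHG_gh, ltr_iltr zs gsG gsH]
  · intro z h1 h2
    rw [coe_g_dvd_iff zs gsG gsH] at h1
    rw [coe_h_dvd_iff zs] at h2
    obtain ⟨c, hc⟩ := h1
    rw [dvdK_iff zs gsG gsH, pGH_gh]
    refine ⟨c, hc.symm, ?_⟩
    have hz : pHG zs z = (zs.ltr (pGH zs z).1 (pGH zs z).2, zs.ltl (pGH zs z).1 (pGH zs z).2) := by
      rw [← pHG_gh zs (pGH zs z).1 (pGH zs z).2, pGH_spec]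
    rw [hz] at h2
    have h2' : h ∣ zs.ltr (pGH zs z).1 (pGH zs z).2 := h2
    rw [hc] at h2'
    rw [(ltr_mul_g zs a c (pGH zs z).2).1] at h2'
    have h3 : iltr zs a h ∣ zs.ltr c (pGH zs z).2 := by
      have := (ltr_dvd_iff zs gsG gsH a
        (h₁ := iltr zs a h) (h₂ := zs.ltr c (pGH zs z).2)).mp
      apply this
      rwa [ltr_iltr zs gsG gsH]
    have h4 : iltr zs c (iltr zs a h) ∣ iltr zs c (zs.ltr c (pGH zs z).2) :=
      (iltr_dvd_iff zs gsG gsH c).mpr h3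
    rwa [iltr_ltr zs gsG gsH] at h4

/-- `lcm(b, g) = g * (g ▶)⁻¹ b = b * (g ◀ (g ▶)⁻¹ b)` for `b ∈ H`, `g ∈ G`. -/
theorem lcm_h_g (b : H) (g : G) :
    IsDvdLCM ((b : K)) ((g : K)) ((b : K) * ((zs.ltl g (iltr zs g b) : G) : K)) := by
  have hkey : (b : K) * ((zs.ltl g (iltr zs g b) : G) : K) = (g : K) * ((iltr zs g b : H) : K) := by
    rw [← ltr_ltl_spec zs g (iltr zs g b), ltr_iltr zs gsG gsH]
  refine ⟨⟨_, rfl⟩, ?_, ?_⟩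
  · rw [hkey]; exact ⟨_, rfl⟩
  · intro z h1 h2
    rw [coe_h_dvd_iff zs] at h1
    rw [coe_g_dvd_iff zs gsG gsH] at h2
    obtain ⟨c, hc⟩ := h2
    rw [hkey, dvdK_iff zs gsG gsH, pGH_gh]
    refine ⟨c, hc.symm, ?_⟩
    have hz : pHG zs z = (zs.ltr (pGH zs z).1 (pGH zs z).2, zs.ltl (pGH zs z).1 (pGH zs z).2) := by
      rw [← pHG_gh zs (pGH zs z).1 (pGH zs z).2, pGH_spec]
    rw [hz] at h1
    have h1' : b ∣ zs.ltr (pGH zs z).1 (pGH zs z).2 := h1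
    rw [hc] at h1'
    rw [(ltr_mul_g zs g c (pGH zs z).2).1] at h1'
    have h3 : iltr zs g b ∣ zs.ltr c (pGH zs z).2 := by
      have := (ltr_dvd_iff zs gsG gsH g
        (h₁ := iltr zs g b) (h₂ := zs.ltr c (pGH zs z).2)).mp
      apply this
      rwa [ltr_iltr zs gsG gsH]
    have h4 : iltr zs c (iltr zs g b) ∣ iltr zs c (zs.ltr c (pGH zs z).2) :=
      (iltr_dvd_iff zs gsG gsH c).mpr h3
    rwa [iltr_ltr zs gsG gsH] at h4

theorem compK_g_h (a : G) (h : H) :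
    (packK zs gsG gsH).comp ((a : K)) ((h : K)) = ((iltr zs a h : H) : K) := by
  apply K_lc zs gsG gsH ((a : K))
  rw [(packK zs gsG gsH).comp_spec,
    (packK zs gsG gsH).join_unique (lcm_g_h zs gsG gsH a h)]

theorem compK_h_g (b : H) (g : G) :
    (packK zs gsG gsH).comp ((b : K)) ((g : K)) = ((zs.ltl g (iltr zs g b) : G) : K) := by
  apply K_lc zs gsG gsH ((b : K))
  rw [(packK zs gsG gsH).comp_spec,
    (packK zs gsG gsH).join_unique (lcm_h_g zs gsG gsH b g)]

end ZSLayer6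
section ZSLayer7

variable {K : Type*} [Monoid K] {G H : Submonoid K} (zs : ZS K G H)
  {ΔG : G} {ΔH : H} (gsG : GarsideStructure G ΔG) (gsH : GarsideStructure H ΔH)
include zs gsG gsH

/-- Conjugation of complements by the `▶`-action. -/
theorem ltr_comp_conj (g' : G) (y b : H) :
    ∃ (y' b' : H), mlen b' = mlen b ∧
      zs.ltr g' ((packOf gsH).comp y b) = (packOf gsH).comp y' b' := by
  set g := iltl zs y g' with hg
  have hgy : zs.ltl g y = g' := ltl_iltl zs gsG gsH y g'
  refine ⟨zs.ltr g y, zs.ltr g b, len_ltr zs gsG gsH g b, ?_⟩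
  apply gsH.mul_left_cancel (zs.ltr g y)
  have h1 : zs.ltr g y * zs.ltr g' ((packOf gsH).comp y b) =
      zs.ltr g (y * (packOf gsH).comp y b) := by
    rw [(ltr_mul_h zs g y _).1, hgy]
  rw [h1, (packOf gsH).comp_spec, ltr_join zs gsG gsH, (packOf gsH).comp_spec]

theorem ltr_foldJoin (g : G) (l : List H) :
    zs.ltr g ((packOf gsH).foldJoin l) = (packOf gsH).foldJoin (l.map (zs.ltr g)) := by
  induction l with
  | nil => exact (ltr_one_h zs g).1
  | cons a t ih =>
    show zs.ltr g ((packOf gsH).join a ((packOf gsH).foldJoin t)) = _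
    rw [ltr_join zs gsG gsH, ih]
    rfl

theorem ltr_Tset_dvd (g' : G) {b : H} (hb : MAtom b) {t : H} (ht : t ∈ Tset b) :
    zs.ltr g' t ∣ DGdef gsH := by
  obtain ⟨y, rfl⟩ := (Tset_mem (packOf gsH)).mp ht
  obtain ⟨y', b', hb', heq⟩ := ltr_comp_conj zs gsG gsH g' y b
  rw [heq]
  exact comp_atom_dvd_DG gsH
    (atom_of_mlen_one gsH.atomic (by rw [hb', mlen_atom gsH.atomic hb])) y'

theorem ltr_fix (g : G) : zs.ltr g (DGdef gsH) = DGdef gsH := by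
  have hdvd : zs.ltr g (DGdef gsH) ∣ DGdef gsH := by
    rw [DGdef, ltr_foldJoin zs gsG gsH]
    apply (packOf gsH).foldJoin_dvd
    intro s hs
    rw [List.mem_map] at hs
    obtain ⟨s', hs', rfl⟩ := hs
    rw [List.mem_map] at hs'
    obtain ⟨a, ha, rfl⟩ := hs'
    have ha' : MAtom a := (atomsList_mem gsH).mp ha
    have hfin : (Tset a).Finite := Tset_finite gsH (packOf gsH) (atom_dvd_delta' gsH ha')
    rw [deltaOf, dif_pos hfin, ltr_foldJoin zs gsG gsH]
    apply (packOf gsH).foldJoin_dvd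
    intro u hu
    rw [List.mem_map] at hu
    obtain ⟨t, ht, rfl⟩ := hu
    rw [Finset.mem_toList, Set.Finite.mem_toFinset] at ht
    exact ltr_Tset_dvd zs gsG gsH g ha' ht
  have hlen : mlen (DGdef gsH) ≤ mlen (zs.ltr g (DGdef gsH)) := by
    rw [len_ltr zs gsG gsH]
  exact eq_of_dvd_mlen gsH.atomic gsH.mul_left_cancel hdvd hlen

theorem iltr_fix (a : G) : iltr zs a (DGdef gsH) = DGdef gsH := by
  apply inj_ltr zs gsG gsH a
  rw [ltr_iltr zs gsG gsH, ltr_fix zs gsG gsH]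

/-- Conjugation of right complements by the `◀`-action. -/
theorem ltl_rcomp_conj (h' : H) (y b : G) :
    ∃ (y' b' : G), mlen b' = mlen b ∧
      zs.ltl ((packOf gsG).rcomp y b) h' = (packOf gsG).rcomp y' b' := by
  set h := iltr zs y h' with hh
  have hyh : zs.ltr y h = h' := ltr_iltr zs gsG gsH y h'
  refine ⟨zs.ltl y h, zs.ltl b h, len_ltl zs gsG gsH b h, ?_⟩
  apply gsG.mul_right_cancel (zs.ltl y h)
  have h1 : zs.ltl ((packOf gsG).rcomp y b) h' * zs.ltl y h =
      zs.ltl ((packOf gsG).rcomp y b * y) h := by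
    rw [(ltr_mul_g zs _ y h).2, hyh]
  rw [h1, (packOf gsG).rcomp_spec, ltl_rjoin zs gsG gsH, (packOf gsG).rcomp_spec]

theorem ltl_rfoldJoin (h : H) (l : List G) :
    zs.ltl ((packOf gsG).rfoldJoin l) h =
      (packOf gsG).rfoldJoin (l.map (fun x => zs.ltl x h)) := by
  induction l with
  | nil => exact (ltr_one_g zs h).2
  | cons a t ih =>
    show zs.ltl ((packOf gsG).rjoin a ((packOf gsG).rfoldJoin t)) h = _
    rw [ltl_rjoin zs gsG gsH, ih]
    rfl

theorem ltl_rTset_rdvd (h' : H) {b : G} (hb : MAtom b) {t : G} (ht : t ∈ rTset gsG b) :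
    RDvd (zs.ltl t h') (DPdef gsG) := by
  obtain ⟨y, rfl⟩ := ht
  obtain ⟨y', b', hb', heq⟩ := ltl_rcomp_conj zs gsG gsH h' y b
  rw [heq]
  have hb'' : MAtom b' := atom_of_mlen_one gsG.atomic (by rw [hb', mlen_atom gsG.atomic hb])
  exact rdvd_trans ((rdeltaOf_lub gsG hb'').1 _ ⟨y', rfl⟩) (rdeltaOf_rdvd_DP gsG hb'')

theorem ltl_fix (h' : H) : zs.ltl (DGdef gsG) h' = DGdef gsG := by
  rw [DG_eq_DP gsG]
  have hrdvd : RDvd (zs.ltl (DPdef gsG) h') (DPdef gsG) := by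
    rw [DPdef, ltl_rfoldJoin zs gsG gsH]
    apply (packOf gsG).rfoldJoin_rdvd
    intro s hs
    rw [List.mem_map] at hs
    obtain ⟨s', hs', rfl⟩ := hs
    rw [List.mem_map] at hs'
    obtain ⟨a, ha, rfl⟩ := hs'
    have ha' : MAtom a := (atomsList_mem gsG).mp ha
    have hfin := rdelta_fin gsG ha'
    rw [rdeltaOf, dif_pos hfin, ltl_rfoldJoin zs gsG gsH]
    apply (packOf gsG).rfoldJoin_rdvd
    intro u hu
    rw [List.mem_map] at hu
    obtain ⟨t, ht, rfl⟩ := hu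
    rw [Finset.mem_toList, Set.Finite.mem_toFinset] at ht
    exact ltl_rTset_rdvd zs gsG gsH h' ha' ht
  have hlen : mlen (DPdef gsG) ≤ mlen (zs.ltl (DPdef gsG) h') := by
    rw [len_ltl zs gsG gsH]
  exact eq_of_rdvd_mlen gsG.atomic hrdvd hlen

/-- The Garside element of `K`. -/
noncomputable def DK : K :=
  (packK zs gsG gsH).join ((DGdef gsG : G) : K) ((DGdef gsH : H) : K)

theorem starK_atoms : ∀ s : K, MAtom s →
    (packK zs gsG gsH).comp s (DK zs gsG gsH) ∣ DK zs gsG gsH := by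
  intro s hs
  rw [DK, (packK zs gsG gsH).comp_join_distrib]
  apply (packK zs gsG gsH).join_dvd
  · -- comp s DG ∣ D
    rcases atomK_cases zs gsG gsH hs with ⟨a, ha, rfl⟩ | ⟨b, hb, rfl⟩
    · rw [compK_coeG zs gsG gsH]
      exact (coe_dvd_g zs (star_DG gsG a)).trans
        ((packK zs gsG gsH).dvd_join_left _ _)
    · rw [compK_h_g zs gsG gsH, ltl_fix zs gsG gsH]
      exact (packK zs gsG gsH).dvd_join_left _ _
  · -- comp s DH ∣ D
    rcases atomK_cases zs gsG gsH hs with ⟨a, ha, rfl⟩ | ⟨b, hb, rfl⟩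
    · rw [compK_g_h zs gsG gsH, iltr_fix zs gsG gsH]
      exact (packK zs gsG gsH).dvd_join_right _ _
    · rw [compK_coeH zs gsG gsH]
      exact (coe_dvd_h zs (star_DG gsH b)).trans
        ((packK zs gsG gsH).dvd_join_right _ _)

theorem starK : ∀ y, (packK zs gsG gsH).comp y (DK zs gsG gsH) ∣ DK zs gsG gsH :=
  (packK zs gsG gsH).star_of_atoms (starK_atoms zs gsG gsH)

theorem balancedK : ∀ x : K, x ∣ DK zs gsG gsH ↔ RDvd x (DK zs gsG gsH) :=
  (packK zs gsG gsH).balanced_of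
    (divisors_finite (atomicK zs gsG gsH) (atomsK_finite zs gsG gsH) _)
    (starK zs gsG gsH)

theorem div_genK : Submonoid.closure {x : K | x ∣ DK zs gsG gsH} = ⊤ := by
  rw [eq_top_iff]
  rintro k -
  obtain ⟨l, hl, hp⟩ := (atomicK zs gsG gsH).1 k
  rw [← hp]
  apply Submonoid.list_prod_mem
  intro x hx
  apply Submonoid.subset_closure
  rcases atomK_cases zs gsG gsH (hl x hx) with ⟨a, ha, rfl⟩ | ⟨b, hb, rfl⟩
  · exact (coe_dvd_g zs (atom_dvd_DG gsG ha)).trans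
      ((packK zs gsG gsH).dvd_join_left _ _)
  · exact (coe_dvd_h zs (atom_dvd_DG gsH hb)).trans
      ((packK zs gsG gsH).dvd_join_right _ _)

theorem mainGarside : GarsideStructure K (DK zs gsG gsH) := by
  refine ⟨K_lc zs gsG gsH, K_rc zs gsG gsH, atomicK zs gsG gsH,
    K_meet_left zs gsG gsH, ?_, K_meet_right zs gsG gsH, K_join_right zs gsG gsH,
    balancedK zs gsG gsH,
    divisors_finite (atomicK zs gsG gsH) (atomsK_finite zs gsG gsH) _,
    div_genK zs gsG gsH⟩
  exact K_join_left zs gsG gsH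

end ZSLayer7

end ZSAux

theorem stmt18 {K : Type*} [Monoid K] {G H : Submonoid K} (zs : ZS K G H)
    (ΔG : G) (ΔH : H)
    (gsG : GarsideStructure G ΔG) (gsH : GarsideStructure H ΔH) :
    ∃ (DG : G) (DH : H) (D : K),
      IsDvdLUB {d : G | ∃ a : G, MAtom a ∧ IsDeltaOf a d} DG ∧
      IsDvdLUB {d : H | ∃ a : H, MAtom a ∧ IsDeltaOf a d} DH ∧
      IsDvdLCM (DG : K) (DH : K) D ∧
      GarsideStructure K D := by
  refine ⟨ZSAux.DGdef gsG, ZSAux.DGdef gsH, ZSAux.DK zs gsG gsH, ZSAux.DG_lub gsG,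
    ZSAux.DG_lub gsH, ?_, ZSAux.mainGarside zs gsG gsH⟩
  exact (ZSAux.packK zs gsG gsH).join_spec _ _
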